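/- arXiv:math/0408176 — 3 statements merged into one kernel-verified Lean document; each statement's English description precedes it below -/
import Mathlib

section
/- For q ≥ 1, the random-cluster measure φ_{G,q} satisfies the positive lattice condition: for all configurations σ, τ ∈ {0,1}^E, φ_{G,q}(σ) · φ_{G,q}(τ) ≤ φ_{G,q}(σ ∧ τ) · φ_{G,q}(σ ∨ τ), where (σ∧τ)_e = min(σ_e, τ_e) and (σ∨τ)_e = max(σ_e, τ_e). -/
/-!
The random-cluster model on a finite graph `G = (V, E)`.
Edges are given by their endpoints `ends : E → V × V` (unordered).  With edge
parameters `p e ∈ (0,1)` and cluster parameter `q > 0`, the random-cluster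
measure gives a configuration `ω : E → Bool` probability proportional to
`q ^ k(ω) · ∏_{ω e = 1} p e · ∏_{ω e = 0} (1 - p e)`, where `k(ω)` is the
number of connected components of the spanning subgraph `(V, {e : ω e = 1})`.
-/

attribute [local instance] Classical.propDecidable

namespace RandomCluster

variable {V E : Type*}

/-- One step along an open edge (in either direction, since edges are undirected). -/
def Step (ends : E → V × V) (ω : E → Bool) (u v : V) : Prop :=
  ∃ e, ω e = true ∧ (ends e = (u, v) ∨ ends e = (v, u))

/-- `Reach ends ω u v` : there is an open path from `u` to `v` in configuration `ω`. -/
def Reach (ends : E → V × V) (ω : E → Bool) (u v : V) : Prop :=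
  Relation.ReflTransGen (Step ends ω) u v

/-- The number of connected components `k(ω)` of the spanning subgraph
`(V, {e : ω e = 1})`: the number of classes of the equivalence relation
generated by open adjacency. -/
noncomputable def numComp (ends : E → V × V) (ω : E → Bool) : ℕ :=
  Nat.card (Quot (Step ends ω))

/-- The open cluster `C_A(ω)` of a set of vertices `A`: the set of edges lying
on some open path starting at a vertex of `A`. -/
def ClusterOf (ends : E → V × V) (A : Set V) (ω : E → Bool) : Set E :=
  {e | ω e = true ∧ ∃ a ∈ A, (Reach ends ω a (ends e).1 ∨ Reach ends ω a (ends e).2)}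

/-- The event `{A ↛ B}` that no open path joins a vertex of `A` to a vertex of `B`. -/
def NoConn (ends : E → V × V) (A B : Set V) : Set (E → Bool) :=
  {ω | ∀ a ∈ A, ∀ b ∈ B, ¬ Reach ends ω a b}

/-- The (unnormalized) random-cluster weight of a configuration. -/
noncomputable def rcWeight [Fintype E] (ends : E → V × V) (p : E → ℝ) (q : ℝ)
    (ω : E → Bool) : ℝ :=
  q ^ numComp ends ω * ∏ e, if ω e then p e else 1 - p e

/-- The random-cluster probability of a single configuration:
`φ_{G,q}(ω) = rcWeight ω / Z`. -/
noncomputable def rcProb [Fintype E] [DecidableEq E] (ends : E → V × V)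
    (p : E → ℝ) (q : ℝ) (ω : E → Bool) : ℝ :=
  rcWeight ends p q ω / ∑ ω' : E → Bool, rcWeight ends p q ω'

/-- The random-cluster probability `φ_{G,q}(A)` of an event `A ⊆ {0,1}^E`. -/
noncomputable def rcPr [Fintype E] [DecidableEq E] (ends : E → V × V)
    (p : E → ℝ) (q : ℝ) (A : Set (E → Bool)) : ℝ :=
  (∑ ω : E → Bool, A.indicator (rcWeight ends p q) ω) /
    ∑ ω : E → Bool, rcWeight ends p q ω

/-- Conditional probability `φ_{G,q}(A | B)`. -/
noncomputable def rcCondPr [Fintype E] [DecidableEq E] (ends : E → V × V)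
    (p : E → ℝ) (q : ℝ) (A B : Set (E → Bool)) : ℝ :=
  rcPr ends p q (A ∩ B) / rcPr ends p q B

/-- Conditional expectation `E_{φ_{G,q}}[f | B]`. -/
noncomputable def rcCondExp [Fintype E] [DecidableEq E] (ends : E → V × V)
    (p : E → ℝ) (q : ℝ) (f : (E → Bool) → ℝ) (B : Set (E → Bool)) : ℝ :=
  (∑ ω : E → Bool, B.indicator (fun ω' => rcWeight ends p q ω' * f ω') ω) /
    ∑ ω : E → Bool, B.indicator (rcWeight ends p q) ω

section Aux

variable (ends : E → V × V)

lemma step_symm (ω : E → Bool) : Symmetric (Step ends ω) := by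
  rintro a b ⟨e, he, h | h⟩
  · exact ⟨e, he, Or.inr h⟩
  · exact ⟨e, he, Or.inl h⟩

lemma reach_symm (ω : E → Bool) : Symmetric (Reach ends ω) :=
  fun a b h => (@Relation.ReflTransGen.symmetric _ _ ⟨fun x y hxy => step_symm ends ω hxy⟩).symm a b h

lemma mk_eq_of_reach {ω : E → Bool} {a b : V} (h : Reach ends ω a b) :
    Quot.mk (Step ends ω) a = Quot.mk (Step ends ω) b := by
  induction h with
  | refl => rfl
  | tail _ h ih => exact ih.trans (Quot.sound h)

lemma mk_eq_iff_reach {ω : E → Bool} {a b : V} :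
    Quot.mk (Step ends ω) a = Quot.mk (Step ends ω) b ↔ Reach ends ω a b := by
  constructor
  · intro h
    rw [Quot.eq] at h
    induction h with
    | rel _ _ h => exact Relation.ReflTransGen.single h
    | refl => exact Relation.ReflTransGen.refl
    | symm _ _ _ ih => exact reach_symm ends ω ih
    | trans _ _ _ _ _ ih1 ih2 => exact ih1.trans ih2
  · exact mk_eq_of_reach ends

lemma step_mono {ω ω' : E → Bool} (h : ∀ e, ω e = true → ω' e = true) {a b : V}
    (hs : Step ends ω a b) : Step ends ω' a b := by
  obtain ⟨e, he, hh⟩ := hs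
  exact ⟨e, h e he, hh⟩

lemma reach_mono {ω ω' : E → Bool} (h : ∀ e, ω e = true → ω' e = true) {a b : V}
    (hr : Reach ends ω a b) : Reach ends ω' a b :=
  Relation.ReflTransGen.mono (fun _ _ => step_mono ends h) _ _ hr

lemma numComp_mono [Finite V] {ω ω' : E → Bool} (h : ∀ e, ω e = true → ω' e = true) :
    numComp ends ω' ≤ numComp ends ω := by
  apply Nat.card_le_card_of_surjective
    (Quot.lift (Quot.mk (Step ends ω')) (fun a b hs => Quot.sound (step_mono ends h hs)))
  intro x
  induction x using Quot.ind with | _ a => exact ⟨Quot.mk _ a, rfl⟩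

lemma update_mono (ω : E → Bool) (e : E) :
    ∀ f, ω f = true → Function.update ω e true f = true := by
  intro f hf
  by_cases h : f = e
  · subst h; simp
  · rwa [Function.update_of_ne h]

lemma step_update_cases {ω : E → Bool} {e : E} {a b : V}
    (h : Step ends (Function.update ω e true) a b) :
    Step ends ω a b ∨ (a = (ends e).1 ∧ b = (ends e).2) ∨ (a = (ends e).2 ∧ b = (ends e).1) := by
  obtain ⟨f, hf, hh⟩ := h
  by_cases hfe : f = e
  · subst hfe
    rcases hh with h | h
    · right; left; rw [h]; exact ⟨rfl, rfl⟩
    · right; right; rw [h]; exact ⟨rfl, rfl⟩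
  · rw [Function.update_of_ne hfe] at hf
    exact Or.inl ⟨f, hf, hh⟩

lemma step_update_fwd (ω : E → Bool) (e : E) :
    Step ends (Function.update ω e true) (ends e).1 (ends e).2 :=
  ⟨e, by simp, Or.inl rfl⟩

lemma step_update_bwd (ω : E → Bool) (e : E) :
    Step ends (Function.update ω e true) (ends e).2 (ends e).1 :=
  ⟨e, by simp, Or.inr rfl⟩

lemma reach_update_cases {ω : E → Bool} {e : E} {a b : V}
    (h : Reach ends (Function.update ω e true) a b) :
    Reach ends ω a b ∨
      (Reach ends ω a (ends e).1 ∧ Reach ends ω (ends e).2 b) ∨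
      (Reach ends ω a (ends e).2 ∧ Reach ends ω (ends e).1 b) := by
  induction h with
  | refl => exact Or.inl Relation.ReflTransGen.refl
  | tail _ hcb ih =>
    rcases step_update_cases ends hcb with hs | ⟨rfl, rfl⟩ | ⟨rfl, rfl⟩
    · rcases ih with h | ⟨h1, h2⟩ | ⟨h1, h2⟩
      · exact Or.inl (h.tail hs)
      · exact Or.inr (Or.inl ⟨h1, h2.tail hs⟩)
      · exact Or.inr (Or.inr ⟨h1, h2.tail hs⟩)
    · rcases ih with h | ⟨h1, h2⟩ | ⟨h1, h2⟩
      · exact Or.inr (Or.inl ⟨h, Relation.ReflTransGen.refl⟩)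
      · exact Or.inr (Or.inl ⟨h1, Relation.ReflTransGen.refl⟩)
      · exact Or.inl h1
    · rcases ih with h | ⟨h1, h2⟩ | ⟨h1, h2⟩
      · exact Or.inr (Or.inr ⟨h, Relation.ReflTransGen.refl⟩)
      · exact Or.inl h1
      · exact Or.inr (Or.inr ⟨h1, Relation.ReflTransGen.refl⟩)

lemma numComp_le_update_add_one [Finite V] (ω : E → Bool) (e : E) :
    numComp ends ω ≤ numComp ends (Function.update ω e true) + 1 := by
  set ω' := Function.update ω e true with hω'
  have hmono := update_mono ω e
  rw [← hω'] at hmono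
  have hsound : ∀ a b : V, Step ends ω a b →
      (if Reach ends ω a (ends e).2 then (Sum.inr () : Quot (Step ends ω') ⊕ Unit)
        else Sum.inl (Quot.mk _ a)) =
      (if Reach ends ω b (ends e).2 then Sum.inr () else Sum.inl (Quot.mk _ b)) := by
    intro a b hs
    have hab : Reach ends ω a b := Relation.ReflTransGen.single hs
    by_cases hb : Reach ends ω b (ends e).2
    · rw [if_pos (show Reach ends ω a (ends e).2 from hab.trans hb), if_pos hb]
    · rw [if_neg (show ¬ Reach ends ω a (ends e).2 from
        fun ha => hb ((reach_symm ends ω hab).trans ha)), if_neg hb]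
      exact congrArg _ (Quot.sound (step_mono ends hmono hs))
  have hinj : Function.Injective (Quot.lift _ hsound) := by
    intro x y
    induction x using Quot.ind with | _ a =>
    induction y using Quot.ind with | _ b =>
    intro hxy
    simp only [Quot.lift_mk] at hxy
    by_cases ha : Reach ends ω a (ends e).2 <;> by_cases hb : Reach ends ω b (ends e).2
    · exact mk_eq_of_reach ends (ha.trans (reach_symm ends ω hb))
    · rw [if_pos ha, if_neg hb] at hxy; cases hxy
    · rw [if_neg ha, if_pos hb] at hxy; cases hxy
    · rw [if_neg ha, if_neg hb] at hxy
      injection hxy with hxy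
      rcases reach_update_cases ends ((mk_eq_iff_reach ends).1 hxy) with h | ⟨h1, h2⟩ | ⟨h1, h2⟩
      · exact mk_eq_of_reach ends h
      · exact absurd (reach_symm ends ω h2) hb
      · exact absurd h1 ha
  calc numComp ends ω ≤ Nat.card (Quot (Step ends ω') ⊕ Unit) :=
        Nat.card_le_card_of_injective _ hinj
    _ = numComp ends ω' + 1 := by rw [Nat.card_sum]; simp [numComp]

lemma numComp_update_of_reach [Finite V] {ω : E → Bool} {e : E}
    (h : Reach ends ω (ends e).1 (ends e).2) :
    numComp ends ω ≤ numComp ends (Function.update ω e true) := by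
  have hsound : ∀ a b : V, Step ends (Function.update ω e true) a b →
      Quot.mk (Step ends ω) a = Quot.mk (Step ends ω) b := by
    intro a b hs
    apply mk_eq_of_reach
    rcases step_update_cases ends hs with h' | ⟨rfl, rfl⟩ | ⟨rfl, rfl⟩
    · exact Relation.ReflTransGen.single h'
    · exact h
    · exact reach_symm ends ω h
  apply Nat.card_le_card_of_surjective (Quot.lift _ hsound)
  intro x
  induction x using Quot.ind with | _ a => exact ⟨Quot.mk _ a, rfl⟩

lemma numComp_update_add_one_le [Finite V] {ω : E → Bool} {e : E}
    (h : ¬ Reach ends ω (ends e).1 (ends e).2) :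
    numComp ends (Function.update ω e true) + 1 ≤ numComp ends ω := by
  set ω' := Function.update ω e true with hω'
  have hmono := update_mono ω e
  rw [← hω'] at hmono
  set j : V → Quot (Step ends ω) := fun a =>
    if Reach ends ω a (ends e).2 then Quot.mk _ (ends e).1 else Quot.mk _ a with hj
  have hjsound : ∀ a b : V, Step ends ω' a b → j a = j b := by
    intro a b hs
    rcases step_update_cases ends hs with hs' | ⟨rfl, rfl⟩ | ⟨rfl, rfl⟩
    · have hab : Reach ends ω a b := Relation.ReflTransGen.single hs'
      by_cases hb : Reach ends ω b (ends e).2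
      · simp only [hj, if_pos (show Reach ends ω a (ends e).2 from hab.trans hb), if_pos hb]
      · simp only [hj, if_neg (show ¬ Reach ends ω a (ends e).2 from
          fun ha => hb ((reach_symm ends ω hab).trans ha)), if_neg hb]
        exact mk_eq_of_reach ends hab
    · simp only [hj, if_neg h,
        if_pos (show Reach ends ω (ends e).2 (ends e).2 from Relation.ReflTransGen.refl)]
    · simp only [hj,
        if_pos (show Reach ends ω (ends e).2 (ends e).2 from Relation.ReflTransGen.refl), if_neg h]
  set F : Quot (Step ends ω') ⊕ Unit → Quot (Step ends ω) :=
    Sum.elim (Quot.lift j hjsound) (fun _ => Quot.mk _ (ends e).2) with hF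
  have hFinj : Function.Injective F := by
    intro x y hxy
    match x, y with
    | Sum.inl x, Sum.inl y =>
      induction x using Quot.ind with | _ a =>
      induction y using Quot.ind with | _ b =>
      simp only [hF, Sum.elim_inl, Quot.lift_mk, hj] at hxy
      apply congrArg Sum.inl
      by_cases ha : Reach ends ω a (ends e).2 <;> by_cases hb : Reach ends ω b (ends e).2
      · rw [if_pos ha, if_pos hb] at hxy
        exact mk_eq_of_reach ends (reach_mono ends hmono (ha.trans (reach_symm ends ω hb)))
      · rw [if_pos ha, if_neg hb] at hxy
        have hub : Reach ends ω (ends e).1 b := (mk_eq_iff_reach ends).1 hxy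
        apply mk_eq_of_reach
        exact (((reach_mono ends hmono ha).tail (step_update_bwd ends ω e)).trans
          (reach_mono ends hmono hub))
      · rw [if_neg ha, if_pos hb] at hxy
        have hau : Reach ends ω a (ends e).1 := (mk_eq_iff_reach ends).1 hxy
        apply mk_eq_of_reach
        exact (((reach_mono ends hmono hau).tail (step_update_fwd ends ω e)).trans
          (reach_mono ends hmono (reach_symm ends ω hb)))
      · rw [if_neg ha, if_neg hb] at hxy
        exact mk_eq_of_reach ends (reach_mono ends hmono ((mk_eq_iff_reach ends).1 hxy))
    | Sum.inl x, Sum.inr u =>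
      exfalso
      induction x using Quot.ind with | _ a =>
      simp only [hF, Sum.elim_inl, Sum.elim_inr, Quot.lift_mk, hj] at hxy
      by_cases ha : Reach ends ω a (ends e).2
      · rw [if_pos ha] at hxy
        exact h ((mk_eq_iff_reach ends).1 hxy)
      · rw [if_neg ha] at hxy
        exact ha ((mk_eq_iff_reach ends).1 hxy)
    | Sum.inr u, Sum.inl y =>
      exfalso
      induction y using Quot.ind with | _ a =>
      simp only [hF, Sum.elim_inl, Sum.elim_inr, Quot.lift_mk, hj] at hxy
      by_cases ha : Reach ends ω a (ends e).2
      · rw [if_pos ha] at hxy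
        exact h ((mk_eq_iff_reach ends).1 hxy.symm)
      · rw [if_neg ha] at hxy
        exact ha ((mk_eq_iff_reach ends).1 hxy.symm)
    | Sum.inr u, Sum.inr u' => rfl
  calc numComp ends ω' + 1 = Nat.card (Quot (Step ends ω') ⊕ Unit) := by
        rw [Nat.card_sum]; simp [numComp]
    _ ≤ numComp ends ω := Nat.card_le_card_of_injective F hFinj

lemma single_edge [Finite V] {α β : E → Bool} (hab : ∀ f, α f = true → β f = true) (e : E) :
    numComp ends (Function.update α e true) + numComp ends β ≤
      numComp ends α + numComp ends (Function.update β e true) := by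
  by_cases h : Reach ends α (ends e).1 (ends e).2
  · have h1 := numComp_update_of_reach ends (reach_mono ends hab h)
    have h2 := numComp_mono ends (update_mono α e)
    omega
  · have h1 := numComp_update_add_one_le ends h
    have h2 := numComp_le_update_add_one ends β e
    omega

/-- Open all edges of `D` in the configuration `ω`. -/
noncomputable def addSet (ω : E → Bool) (D : Finset E) : E → Bool :=
  fun e => if e ∈ D then true else ω e

lemma addSet_insert (ω : E → Bool) (D : Finset E) (f : E) :
    addSet ω (insert f D) = Function.update (addSet ω D) f true := by
  funext e
  by_cases he : e = f
  · subst he; simp [addSet]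
  · simp [addSet, Function.update_of_ne he, he]

lemma addSet_mono {α β : E → Bool} (h : ∀ f, α f = true → β f = true) (D : Finset E) :
    ∀ f, addSet α D f = true → addSet β D f = true := by
  intro f hf
  by_cases hm : f ∈ D
  · simp [addSet, hm]
  · simp only [addSet, if_neg hm] at *
    exact h f hf

lemma supermod_aux [Finite V] (D : Finset E) :
    ∀ α β : E → Bool, (∀ f, α f = true → β f = true) →
      numComp ends (addSet α D) + numComp ends β ≤
        numComp ends α + numComp ends (addSet β D) := by
  induction D using Finset.induction_on with
  | empty =>
    intro α β _
    have hA : ∀ γ : E → Bool, addSet γ ∅ = γ := fun γ => funext fun e => by simp [addSet]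
    rw [hA, hA]
  | @insert f D _ ih =>
    intro α β h
    rw [addSet_insert, addSet_insert]
    have h1 := single_edge ends (α := addSet α D) (β := addSet β D) (addSet_mono h D) f
    have h2 := ih α β h
    omega

lemma numComp_supermodular [Finite V] [Fintype E] (σ τ : E → Bool) :
    numComp ends σ + numComp ends τ ≤
      numComp ends (fun e => min (σ e) (τ e)) + numComp ends (fun e => max (σ e) (τ e)) := by
  classical
  set D : Finset E := Finset.univ.filter (fun e => σ e = true ∧ τ e = false) with hD
  have h1 : addSet (fun e => min (σ e) (τ e)) D = σ := by
    funext e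
    simp only [addSet, hD, Finset.mem_filter, Finset.mem_univ, true_and]
    cases hσ : σ e <;> cases hτ : τ e <;> simp
  have h2 : addSet τ D = fun e => max (σ e) (τ e) := by
    funext e
    simp only [addSet, hD, Finset.mem_filter, Finset.mem_univ, true_and]
    cases hσ : σ e <;> cases hτ : τ e <;> simp
  have h3 : ∀ f, min (σ f) (τ f) = true → τ f = true := by
    intro f
    cases hσ : σ f <;> cases hτ : τ f <;> simp
  have := supermod_aux ends D (fun e => min (σ e) (τ e)) τ h3
  rw [h1, h2] at this
  omega

lemma rcWeight_pos [Fintype E] {p : E → ℝ} (hp : ∀ e, 0 < p e ∧ p e < 1) {q : ℝ}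
    (hq : 0 < q) (ω : E → Bool) : 0 < rcWeight ends p q ω := by
  apply mul_pos (pow_pos hq _)
  apply Finset.prod_pos
  intro e _
  cases h : ω e
  · simp only [h, Bool.false_eq_true, if_false]
    linarith [(hp e).2]
  · simp only [h, if_true]
    exact (hp e).1

lemma rcWeight_ineq [Finite V] [Fintype E] {p : E → ℝ} (hp : ∀ e, 0 < p e ∧ p e < 1)
    {q : ℝ} (hq : 1 ≤ q) (σ τ : E → Bool) :
    rcWeight ends p q σ * rcWeight ends p q τ ≤
      rcWeight ends p q (fun e => min (σ e) (τ e)) *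
        rcWeight ends p q (fun e => max (σ e) (τ e)) := by
  have hq0 : 0 < q := lt_of_lt_of_le one_pos hq
  have hP : ∀ ω : E → Bool, 0 < ∏ e, if ω e then p e else 1 - p e := by
    intro ω
    apply Finset.prod_pos
    intro e _
    cases h : ω e
    · simp only [h, Bool.false_eq_true, if_false]
      linarith [(hp e).2]
    · simp only [h, if_true]
      exact (hp e).1
  have hprod : (∏ e, if σ e then p e else 1 - p e) * (∏ e, if τ e then p e else 1 - p e)
      = (∏ e, if min (σ e) (τ e) then p e else 1 - p e) *
          (∏ e, if max (σ e) (τ e) then p e else 1 - p e) := by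
    rw [← Finset.prod_mul_distrib, ← Finset.prod_mul_distrib]
    refine Finset.prod_congr rfl fun e _ => ?_
    cases hσ : σ e <;> cases hτ : τ e <;> simp [mul_comm]
  unfold rcWeight
  calc (q ^ numComp ends σ * ∏ e, if σ e then p e else 1 - p e) *
        (q ^ numComp ends τ * ∏ e, if τ e then p e else 1 - p e)
      = q ^ (numComp ends σ + numComp ends τ) *
          ((∏ e, if σ e then p e else 1 - p e) * ∏ e, if τ e then p e else 1 - p e) := by
        rw [pow_add]; ring
    _ ≤ q ^ (numComp ends (fun e => min (σ e) (τ e)) + numComp ends (fun e => max (σ e) (τ e))) *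
          ((∏ e, if σ e then p e else 1 - p e) * ∏ e, if τ e then p e else 1 - p e) := by
        apply mul_le_mul_of_nonneg_right
          (pow_le_pow_right₀ hq (numComp_supermodular ends σ τ))
        exact le_of_lt (mul_pos (hP σ) (hP τ))
    _ = (q ^ numComp ends (fun e => min (σ e) (τ e)) *
            ∏ e, if min (σ e) (τ e) then p e else 1 - p e) *
          (q ^ numComp ends (fun e => max (σ e) (τ e)) *
            ∏ e, if max (σ e) (τ e) then p e else 1 - p e) := by
        rw [hprod, pow_add]; ring

end Aux

/-- Lemma 2.2. For `q ≥ 1` the random-cluster measure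
satisfies the positive lattice (FKG lattice) condition:
`φ(σ) · φ(τ) ≤ φ(σ ∧ τ) · φ(σ ∨ τ)`, where `(σ∧τ)_e = min(σ_e, τ_e)` and
`(σ∨τ)_e = max(σ_e, τ_e)`. -/
theorem stmt9 [Fintype V] [Fintype E] [DecidableEq E]
    (ends : E → V × V) (p : E → ℝ) (hp : ∀ e, 0 < p e ∧ p e < 1)
    (q : ℝ) (hq : 1 ≤ q)
    (σ τ : E → Bool) :
    rcProb ends p q σ * rcProb ends p q τ ≤
      rcProb ends p q (fun e => min (σ e) (τ e)) *
        rcProb ends p q (fun e => max (σ e) (τ e)) := by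
  have hq0 : 0 < q := lt_of_lt_of_le one_pos hq
  have hZ : 0 < ∑ ω' : E → Bool, rcWeight ends p q ω' :=
    Finset.sum_pos (fun ω _ => rcWeight_pos ends hp hq0 ω) Finset.univ_nonempty
  unfold rcProb
  rw [div_mul_div_comm, div_mul_div_comm]
  exact (div_le_div_iff_of_pos_right (mul_pos hZ hZ)).2 (rcWeight_ineq ends hp hq σ τ)

end RandomCluster
end

section
/- Suppose W_1,…,W_a and Z_1,…,Z_b are {0,1}-valued random variables whose joint distribution ψ satisfies: (i) W_1,…,W_a are positively associated; (ii) Z_1,…,Z_b are conditionally positively associated given (W_1,…,W_a); (iii) for W, W' ∈ {0,1}^a with W' ≥ W (coordinatewise) and both of positive probability, the conditional distribution ψ(·|W') of (Z_1,…,Z_b) given (W_1,…,W_a)=W' stochastically dominates ψ(·|W). Then the full collection W_1,…,W_a, Z_1,…,Z_b is positively associated. -/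
/-!
A lemma on positive association (Lemma 2.5 of van den Berg–Häggström–Kahn).
`ψ` is a joint distribution of `{0,1}`-valued random variables
`W_1, …, W_a, Z_1, …, Z_b`, modelled as a probability mass function on
`(Fin a → Bool) × (Fin b → Bool)` (with `Bool` ordered by `false < true` and
tuples ordered coordinatewise).  A collection is positively associated if
`E[f·g] ≥ E[f]·E[g]` for all pairs of increasing functions `f, g` of the
collection.
-/

namespace AssocLemma

variable {a b : ℕ}

/-- The marginal distribution of `(W_1, …, W_a)`. -/
noncomputable def margW (ψ : (Fin a → Bool) × (Fin b → Bool) → ℝ)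
    (w : Fin a → Bool) : ℝ :=
  ∑ z : Fin b → Bool, ψ (w, z)

/-- The conditional expectation of `f(Z_1, …, Z_b)` given `(W_1, …, W_a) = w`. -/
noncomputable def condExpZ (ψ : (Fin a → Bool) × (Fin b → Bool) → ℝ)
    (w : Fin a → Bool) (f : (Fin b → Bool) → ℝ) : ℝ :=
  (∑ z : Fin b → Bool, ψ (w, z) * f z) / margW ψ w

/-- Lemma 2.5.  Suppose the joint distribution `ψ` of
`W_1, …, W_a, Z_1, …, Z_b` satisfies:
(i) `W_1, …, W_a` are positively associated;
(ii) `Z_1, …, Z_b` are conditionally positively associated given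
`(W_1, …, W_a)`;
(iii) for `W ≤ W'` of positive probability, the conditional distribution of
`(Z_1, …, Z_b)` given `W'` stochastically dominates the one given `W`.
Then the full collection `W_1, …, W_a, Z_1, …, Z_b` is positively associated. -/
theorem stmt12 (ψ : (Fin a → Bool) × (Fin b → Bool) → ℝ)
    (hψ0 : ∀ x, 0 ≤ ψ x)
    (hψ1 : ∑ x : (Fin a → Bool) × (Fin b → Bool), ψ x = 1)
    -- (i) the `W`'s are positively associated
    (hi : ∀ f g : (Fin a → Bool) → ℝ, Monotone f → Monotone g →
      ∑ w : Fin a → Bool, margW ψ w * (f w * g w) ≥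
        (∑ w : Fin a → Bool, margW ψ w * f w) *
          (∑ w : Fin a → Bool, margW ψ w * g w))
    -- (ii) the `Z`'s are conditionally positively associated given the `W`'s
    (hii : ∀ w : Fin a → Bool, 0 < margW ψ w →
      ∀ f g : (Fin b → Bool) → ℝ, Monotone f → Monotone g →
        condExpZ ψ w (fun z => f z * g z) ≥ condExpZ ψ w f * condExpZ ψ w g)
    -- (iii) stochastic domination of the conditional distributions
    (hiii : ∀ w w' : Fin a → Bool, w ≤ w' → 0 < margW ψ w → 0 < margW ψ w' →
      ∀ f : (Fin b → Bool) → ℝ, Monotone f →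
        condExpZ ψ w f ≤ condExpZ ψ w' f) :
    -- conclusion: the whole collection is positively associated
    ∀ f g : (Fin a → Bool) × (Fin b → Bool) → ℝ, Monotone f → Monotone g →
      ∑ x : (Fin a → Bool) × (Fin b → Bool), ψ x * (f x * g x) ≥
        (∑ x : (Fin a → Bool) × (Fin b → Bool), ψ x * f x) *
          (∑ x : (Fin a → Bool) × (Fin b → Bool), ψ x * g x) := by
  intro f g hf hg
  classical
  have hm0 : ∀ w, 0 ≤ margW ψ w := fun w => Finset.sum_nonneg fun z _ => hψ0 _
  have hz0 : ∀ w, margW ψ w = 0 → ∀ z, ψ (w, z) = 0 := by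
    intro w hw z
    exact (Finset.sum_eq_zero_iff_of_nonneg (fun z _ => hψ0 (w, z))).1 hw z (Finset.mem_univ z)
  set P : Finset (Fin a → Bool) := Finset.univ.filter (fun w => 0 < margW ψ w) with hPdef
  have hmemP : ∀ w, w ∈ P ↔ 0 < margW ψ w := by
    intro w; simp [hPdef]
  have hPne : P.Nonempty := by
    by_contra h
    have h0 : ∀ w : Fin a → Bool, margW ψ w = 0 := by
      intro w
      rcases (hm0 w).lt_or_eq with h1 | h1
      · exact absurd ⟨w, (hmemP w).2 h1⟩ h
      · exact h1.symm
    have : (1 : ℝ) = 0 := by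
      rw [← hψ1, Fintype.sum_prod_type]
      exact Finset.sum_eq_zero fun w _ => h0 w
    norm_num at this
  -- conditional expectations
  set F : (Fin a → Bool) → ℝ := fun w => condExpZ ψ w (fun z => f (w, z)) with hFdef
  set G : (Fin a → Bool) → ℝ := fun w => condExpZ ψ w (fun z => g (w, z)) with hGdef
  -- sum decomposition
  have hsum : ∀ (h : (Fin a → Bool) × (Fin b → Bool) → ℝ),
      ∑ x : (Fin a → Bool) × (Fin b → Bool), ψ x * h x =
        ∑ w : Fin a → Bool, margW ψ w * condExpZ ψ w (fun z => h (w, z)) := by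
    intro h
    rw [Fintype.sum_prod_type]
    refine Finset.sum_congr rfl fun w _ => ?_
    rcases (hm0 w).lt_or_eq with h1 | h1
    · rw [condExpZ, mul_div_cancel₀ _ h1.ne']
    · rw [← h1]
      simp only [condExpZ, ← h1, zero_mul]
      exact Finset.sum_eq_zero fun z _ => by rw [hz0 w h1.symm z, zero_mul]
  -- monotonicity of condExpZ in the function
  have hce_mono : ∀ w, 0 < margW ψ w → ∀ p q : (Fin b → Bool) → ℝ,
      (∀ z, p z ≤ q z) → condExpZ ψ w p ≤ condExpZ ψ w q := by
    intro w hw p q hpq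
    unfold condExpZ
    apply div_le_div_of_nonneg_right ?_ hw.le |>.trans_eq rfl
    exact Finset.sum_le_sum fun z _ => mul_le_mul_of_nonneg_left (hpq z) (hψ0 _)
  -- F, G monotone on positive-probability points
  have hFmono : ∀ w w', w ≤ w' → 0 < margW ψ w → 0 < margW ψ w' → F w ≤ F w' := by
    intro w w' hww hw hw'
    calc F w ≤ condExpZ ψ w (fun z => f (w', z)) :=
          hce_mono w hw _ _ fun z => hf ⟨hww, le_rfl⟩
      _ ≤ F w' := hiii w w' hww hw hw' _ fun z z' hz => hf ⟨le_rfl, hz⟩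
  have hGmono : ∀ w w', w ≤ w' → 0 < margW ψ w → 0 < margW ψ w' → G w ≤ G w' := by
    intro w w' hww hw hw'
    calc G w ≤ condExpZ ψ w (fun z => g (w', z)) :=
          hce_mono w hw _ _ fun z => hg ⟨hww, le_rfl⟩
      _ ≤ G w' := hiii w w' hww hw hw' _ fun z z' hz => hg ⟨le_rfl, hz⟩
  -- the monotone modifications
  have hins : ∀ (c : ℝ) (H : (Fin a → Bool) → ℝ) (w : Fin a → Bool),
      (insert c (((P.filter (· ≤ w)).image H))).Nonempty := fun c H w =>
    Finset.insert_nonempty _ _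
  set cF : ℝ := (P.image F).min' (hPne.image F) with hcF
  set cG : ℝ := (P.image G).min' (hPne.image G) with hcG
  set F' : (Fin a → Bool) → ℝ :=
    fun w => (insert cF ((P.filter (· ≤ w)).image F)).max' (hins cF F w) with hF'def
  set G' : (Fin a → Bool) → ℝ :=
    fun w => (insert cG ((P.filter (· ≤ w)).image G)).max' (hins cG G w) with hG'def
  have hmodmono : ∀ (c : ℝ) (H : (Fin a → Bool) → ℝ),
      Monotone (fun w => (insert c ((P.filter (· ≤ w)).image H)).max' (hins c H w)) := by
    intro c H w w' hww
    apply Finset.max'_subset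
    apply Finset.insert_subset_insert
    apply Finset.image_subset_image
    intro x hx
    rw [Finset.mem_filter] at hx ⊢
    exact ⟨hx.1, hx.2.trans hww⟩
  have hmodeq : ∀ (c : ℝ) (H : (Fin a → Bool) → ℝ),
      (∀ w w', w ≤ w' → 0 < margW ψ w → 0 < margW ψ w' → H w ≤ H w') →
      (∀ w, 0 < margW ψ w → c ≤ H w) →
      ∀ w, 0 < margW ψ w →
        (insert c ((P.filter (· ≤ w)).image H)).max' (hins c H w) = H w := by
    intro c H hmono hc w hw
    apply le_antisymm
    · apply Finset.max'_le
      intro x hx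
      rcases Finset.mem_insert.1 hx with rfl | hx
      · exact hc w hw
      · obtain ⟨w'', hw'', rfl⟩ := Finset.mem_image.1 hx
        rw [Finset.mem_filter] at hw''
        exact hmono _ _ hw''.2 ((hmemP _).1 hw''.1) hw
    · apply Finset.le_max'
      apply Finset.mem_insert_of_mem
      exact Finset.mem_image.2 ⟨w, Finset.mem_filter.2 ⟨(hmemP w).2 hw, le_rfl⟩, rfl⟩
  have hcFle : ∀ w, 0 < margW ψ w → cF ≤ F w := fun w hw =>
    Finset.min'_le _ _ (Finset.mem_image.2 ⟨w, (hmemP w).2 hw, rfl⟩)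
  have hcGle : ∀ w, 0 < margW ψ w → cG ≤ G w := fun w hw =>
    Finset.min'_le _ _ (Finset.mem_image.2 ⟨w, (hmemP w).2 hw, rfl⟩)
  have hF'eq : ∀ w, 0 < margW ψ w → F' w = F w := hmodeq cF F hFmono hcFle
  have hG'eq : ∀ w, 0 < margW ψ w → G' w = G w := hmodeq cG G hGmono hcGle
  -- weighted sums only see positive-probability points
  have hwsum : ∀ H H' : (Fin a → Bool) → ℝ, (∀ w, 0 < margW ψ w → H w = H' w) →
      ∑ w : Fin a → Bool, margW ψ w * H w = ∑ w : Fin a → Bool, margW ψ w * H' w := by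
    intro H H' hHH'
    refine Finset.sum_congr rfl fun w _ => ?_
    rcases (hm0 w).lt_or_eq with h1 | h1
    · rw [hHH' w h1]
    · rw [← h1, zero_mul, zero_mul]
  -- assemble
  rw [hsum (fun x => f x * g x), hsum f, hsum g]
  rw [hwsum _ F' fun w hw => (hF'eq w hw).symm, hwsum _ G' fun w hw => (hG'eq w hw).symm]
  calc (∑ w : Fin a → Bool, margW ψ w * F' w) * (∑ w : Fin a → Bool, margW ψ w * G' w)
      ≤ ∑ w : Fin a → Bool, margW ψ w * (F' w * G' w) :=
        hi F' G' (hmodmono cF F) (hmodmono cG G)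
    _ ≤ ∑ w : Fin a → Bool, margW ψ w * condExpZ ψ w (fun z => f (w, z) * g (w, z)) := by
        refine Finset.sum_le_sum fun w _ => ?_
        rcases (hm0 w).lt_or_eq with h1 | h1
        · refine mul_le_mul_of_nonneg_left ?_ (hm0 w)
          rw [hF'eq w h1, hG'eq w h1]
          exact hii w h1 _ _ (fun z z' hz => hf ⟨le_rfl, hz⟩) (fun z z' hz => hg ⟨le_rfl, hz⟩)
        · rw [← h1, zero_mul, zero_mul]

end AssocLemma
end

section
/- Let s be a vertex of G, let X ⊆ V \ {s} with Pr(R_X) > 0, and let f and g be bounded increasing functions of C_s. Then E[f·g | R_X] ≥ E[f | R_X] · E[g | R_X]; equivalently, conditioned on {s↛x for all x ∈ X}, the random variables 1_{{s→y}}, y ∈ V, are positively associated. -/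
/-!
Percolation on a finite graph `G = (V, E)` in which each edge is either
oriented or unoriented.  An edge `e` has endpoints `ends e : V × V`; if
`oriented e = true` it may be traversed only from `(ends e).1` to `(ends e).2`,
while if `oriented e = false` it may be traversed in either direction.  Each
edge is independently open (`ω e = true`) with probability `p e`; `Pr` is the
resulting product measure on configurations `ω : E → Bool`.
-/

attribute [local instance] Classical.propDecidable

namespace MixedPerc

variable {V E : Type*}

/-- One step along an open edge, respecting orientations. -/
def Step (ends : E → V × V) (oriented : E → Bool) (ω : E → Bool) (u v : V) : Prop :=
  ∃ e, ω e = true ∧ (ends e = (u, v) ∨ (oriented e = false ∧ ends e = (v, u)))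

/-- `Reach ends oriented ω u v` : there is an open path from `u` to `v`
respecting the orientations of the oriented edges. -/
def Reach (ends : E → V × V) (oriented : E → Bool) (ω : E → Bool) (u v : V) : Prop :=
  Relation.ReflTransGen (Step ends oriented ω) u v

/-- The open cluster `C_s(ω)` of `s`: the set of edges lying on some open path
(respecting orientations) starting at `s`. -/
def Cluster (ends : E → V × V) (oriented : E → Bool) (s : V) (ω : E → Bool) : Set E :=
  {e | ω e = true ∧ (Reach ends oriented ω s (ends e).1 ∨
        (oriented e = false ∧ Reach ends oriented ω s (ends e).2))}

/-- `R_X`: the event that there is no open path (respecting orientations) from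
`s` to any vertex of `X`. -/
def RX (ends : E → V × V) (oriented : E → Bool) (s : V) (X : Set V) :
    Set (E → Bool) :=
  {ω | ∀ x ∈ X, ¬ Reach ends oriented ω s x}

/-- The probability of a single configuration under the product measure. -/
noncomputable def weight [Fintype E] (p : E → ℝ) (ω : E → Bool) : ℝ :=
  ∏ e, if ω e then p e else 1 - p e

/-- The probability of an event `A ⊆ {0,1}^E`. -/
noncomputable def Pr [Fintype E] [DecidableEq E] (p : E → ℝ) (A : Set (E → Bool)) : ℝ :=
  ∑ ω : E → Bool, A.indicator (weight p) ω

/-- Conditional expectation `E[f | B]`. -/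
noncomputable def condExp [Fintype E] [DecidableEq E] (p : E → ℝ)
    (f : (E → Bool) → ℝ) (B : Set (E → Bool)) : ℝ :=
  (∑ ω : E → Bool, B.indicator (fun ω' => weight p ω' * f ω') ω) / Pr p B


set_option linter.unusedSectionVars false
set_option linter.unusedVariables false
set_option maxHeartbeats 1000000

section Dev

variable (ends : E → V × V) (oriented : E → Bool) (s : V)

/-- entry condition of an edge w.r.t. a configuration -/
def EntC (ω : E → Bool) (e : E) : Prop :=
  Reach ends oriented ω s (ends e).1 ∨
    (oriented e = false ∧ Reach ends oriented ω s (ends e).2)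

/-- the configuration opening exactly the edges of `C` -/
noncomputable def ind (C : Set E) : E → Bool := fun e => if e ∈ C then true else false

lemma ind_eq_true {C : Set E} {e : E} : ind C e = true ↔ e ∈ C := by
  unfold ind; split <;> simp_all

lemma mem_cluster {ω : E → Bool} {e : E} :
    e ∈ Cluster ends oriented s ω ↔ ω e = true ∧ EntC ends oriented s ω e := Iff.rfl

variable {ends oriented s}

lemma step_mono {ω ω' : E → Bool} (h : ∀ e, ω e = true → ω' e = true) {u v : V}
    (hs : Step ends oriented ω u v) : Step ends oriented ω' u v := by
  obtain ⟨e, he, hor⟩ := hs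
  exact ⟨e, h e he, hor⟩

lemma reach_mono {ω ω' : E → Bool} (h : ∀ e, ω e = true → ω' e = true) {u v : V}
    (hr : Reach ends oriented ω u v) : Reach ends oriented ω' u v := by
  induction hr with
  | refl => exact Relation.ReflTransGen.refl
  | tail _ hs ih => exact ih.tail (step_mono h hs)

lemma entc_mono {ω ω' : E → Bool} (h : ∀ e, ω e = true → ω' e = true) {e : E}
    (he : EntC ends oriented s ω e) : EntC ends oriented s ω' e := by
  rcases he with h1 | ⟨ho, h2⟩
  · exact Or.inl (reach_mono h h1)
  · exact Or.inr ⟨ho, reach_mono h h2⟩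

lemma cluster_mono {ω ω' : E → Bool} (h : ∀ e, ω e = true → ω' e = true) :
    Cluster ends oriented s ω ⊆ Cluster ends oriented s ω' := by
  intro e he
  exact ⟨h e he.1, entc_mono h he.2⟩

lemma cluster_open {ω : E → Bool} {e : E} (h : e ∈ Cluster ends oriented s ω) :
    ω e = true := h.1

lemma ind_cluster_le {ω : E → Bool} :
    ∀ e, ind (Cluster ends oriented s ω) e = true → ω e = true := by
  intro e he
  exact cluster_open (ind_eq_true.mp he)

/-- a step from a reachable vertex yields a cluster edge -/
lemma step_cluster {ω : E → Bool} {u v : V} (hu : Reach ends oriented ω s u)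
    (hs : Step ends oriented ω u v) : ∃ e, ω e = true ∧ e ∈ Cluster ends oriented s ω ∧
      (ends e = (u, v) ∨ (oriented e = false ∧ ends e = (v, u))) := by
  obtain ⟨e, he, hor⟩ := hs
  refine ⟨e, he, ⟨he, ?_⟩, hor⟩
  rcases hor with h1 | ⟨ho, h2⟩
  · exact Or.inl (by rw [h1]; exact hu)
  · exact Or.inr ⟨ho, by rw [h2]; exact hu⟩

/-- Reachability only uses cluster edges. -/
lemma reach_ind_cluster {ω : E → Bool} {v : V} (h : Reach ends oriented ω s v) :
    Reach ends oriented (ind (Cluster ends oriented s ω)) s v := by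
  induction h with
  | refl => exact Relation.ReflTransGen.refl
  | tail hab hbc ih =>
      rename_i b c
      obtain ⟨e, he, hecl, hor⟩ := step_cluster hab hbc
      exact ih.tail ⟨e, ind_eq_true.mpr hecl, hor⟩

lemma reach_cluster_iff {ω : E → Bool} {v : V} :
    Reach ends oriented (ind (Cluster ends oriented s ω)) s v ↔ Reach ends oriented ω s v :=
  ⟨fun h => reach_mono ind_cluster_le h, fun h => reach_ind_cluster h⟩

lemma cluster_idem (ω : E → Bool) :
    Cluster ends oriented s (ind (Cluster ends oriented s ω)) = Cluster ends oriented s ω := by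
  apply Set.Subset.antisymm
  · exact cluster_mono ind_cluster_le
  · intro e he
    refine ⟨ind_eq_true.mpr he, ?_⟩
    rcases he.2 with h1 | ⟨ho, h2⟩
    · exact Or.inl (reach_ind_cluster h1)
    · exact Or.inr ⟨ho, reach_ind_cluster h2⟩

end Dev


section Dev2

variable {ends : E → V × V} {oriented : E → Bool} {s : V}

/-- The boundary of an edge set: edges not in `C` whose entry is reachable in `C`. -/
def Delta (ends : E → V × V) (oriented : E → Bool) (s : V) (C : Set E) : Set E :=
  {e | e ∉ C ∧ EntC ends oriented s (ind C) e}

lemma ind_le {C : Set E} {ω : E → Bool} (h : ∀ e ∈ C, ω e = true) :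
    ∀ e, ind C e = true → ω e = true := fun e he => h e (ind_eq_true.mp he)

/-- characterization of the fiber `{ω | Cluster ω = C}` as a cylinder, for feasible `C`. -/
lemma fiber_char {C : Set E} (hC : Cluster ends oriented s (ind C) = C) (ω : E → Bool) :
    Cluster ends oriented s ω = C ↔
      ((∀ e ∈ C, ω e = true) ∧ (∀ e ∈ Delta ends oriented s C, ω e = false)) := by
  constructor
  · intro hcl
    constructor
    · intro e he; rw [← hcl] at he; exact he.1
    · intro e he
      by_contra hne
      have hopen : ω e = true := by
        cases h : ω e
        · exact absurd h hne
        · rfl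
      apply he.1
      rw [← hcl]
      refine ⟨hopen, entc_mono ?_ he.2⟩
      intro e' he'
      have : e' ∈ C := ind_eq_true.mp he'
      rw [← hcl] at this; exact this.1
  · rintro ⟨h1, h2⟩
    have hR : ∀ v, Reach ends oriented ω s v → Reach ends oriented (ind C) s v := by
      intro v hv
      induction hv with
      | refl => exact Relation.ReflTransGen.refl
      | tail hab hbc ih =>
          rename_i b c
          obtain ⟨e, he, hor⟩ := hbc
          have hent : EntC ends oriented s (ind C) e := by
            rcases hor with h' | ⟨ho, h'⟩
            · exact Or.inl (by rw [h']; exact ih)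
            · exact Or.inr ⟨ho, by rw [h']; exact ih⟩
          have heC : e ∈ C := by
            by_contra heC
            have : e ∈ Delta ends oriented s C := ⟨heC, hent⟩
            rw [h2 e this] at he; exact Bool.false_ne_true he
          exact ih.tail ⟨e, ind_eq_true.mpr heC, hor⟩
    apply Set.Subset.antisymm
    · intro e he
      have hent : EntC ends oriented s (ind C) e := by
        rcases he.2 with h' | ⟨ho, h'⟩
        · exact Or.inl (hR _ h')
        · exact Or.inr ⟨ho, hR _ h'⟩
      by_contra heC
      have hd : e ∈ Delta ends oriented s C := ⟨heC, hent⟩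
      have hot := he.1
      rw [h2 e hd] at hot; exact Bool.false_ne_true hot
    · intro e he
      have : e ∈ Cluster ends oriented s (ind C) := by rw [hC]; exact he
      exact ⟨h1 e he, entc_mono (ind_le h1) this.2⟩

lemma rx_iff {X : Set V} {ω : E → Bool} :
    ω ∈ RX ends oriented s X ↔
      ∀ x ∈ X, ¬ Reach ends oriented (ind (Cluster ends oriented s ω)) s x := by
  constructor
  · intro h x hx hr; exact h x hx (reach_cluster_iff.mp hr)
  · intro h x hx hr; exact h x hx (reach_cluster_iff.mpr hr)

lemma rx_anti {X : Set V} {ω ω' : E → Bool} (h : ∀ e, ω e = true → ω' e = true)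
    (h' : ω' ∈ RX ends oriented s X) : ω ∈ RX ends oriented s X :=
  fun x hx hr => h' x hx (reach_mono h hr)

end Dev2


section Weights

variable [Fintype E] [DecidableEq E]

lemma weight_nonneg {p : E → ℝ} (hp : ∀ e, 0 ≤ p e ∧ p e ≤ 1) (ω : E → Bool) :
    0 ≤ weight p ω := by
  apply Finset.prod_nonneg
  intro e _
  split
  · exact (hp e).1
  · linarith [(hp e).2]

lemma sum_weight {p : E → ℝ} : ∑ ω : E → Bool, weight p ω = 1 := by
  unfold weight
  rw [← Fintype.piFinset_univ,
      ← Finset.prod_univ_sum (fun _ => (Finset.univ : Finset Bool))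
        (fun e b => if b then p e else 1 - p e)]
  rw [← Finset.prod_const_one (s := (Finset.univ : Finset E))]
  apply Finset.prod_congr rfl
  intro e _
  rw [Fintype.sum_bool]
  simp

lemma supp_forced {p : E → ℝ} {ω : E → Bool} (h : weight p ω ≠ 0) (e : E) :
    (p e = 1 → ω e = true) ∧ (p e = 0 → ω e = false) := by
  constructor
  · intro hp1
    by_contra hne
    apply h
    apply Finset.prod_eq_zero (Finset.mem_univ e)
    have : ω e = false := by cases hh : ω e; rfl; exact absurd hh hne
    rw [this, hp1]; simp
  · intro hp0
    by_contra hne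
    apply h
    apply Finset.prod_eq_zero (Finset.mem_univ e)
    have : ω e = true := by cases hh : ω e; exact absurd hh hne; rfl
    rw [this, hp0]; simp

lemma weight_split {p : E → ℝ} (e : E) (ω : E → Bool) :
    weight p ω = p e * weight (Function.update p e 1) ω
      + (1 - p e) * weight (Function.update p e 0) ω := by
  unfold weight
  rw [← Finset.mul_prod_erase Finset.univ _ (Finset.mem_univ e),
      ← Finset.mul_prod_erase Finset.univ
        (fun e' => if ω e' then Function.update p e 1 e' else 1 - Function.update p e 1 e')
        (Finset.mem_univ e),
      ← Finset.mul_prod_erase Finset.univ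
        (fun e' => if ω e' then Function.update p e 0 e' else 1 - Function.update p e 0 e')
        (Finset.mem_univ e)]
  have h1 : ∀ q : ℝ, (∏ e' ∈ Finset.univ.erase e, if ω e' then Function.update p e q e' else 1 - Function.update p e q e')
      = ∏ e' ∈ Finset.univ.erase e, if ω e' then p e' else 1 - p e' := by
    intro (q : ℝ)
    apply Finset.prod_congr rfl
    intro x hx
    rw [Function.update_of_ne (Finset.ne_of_mem_erase hx)]
  rw [h1, h1, Function.update_self, Function.update_self]
  cases h : ω e <;> simp <;> ring

/-- Independence: if `φ` depends only on coordinates in `S` and `ψ` only on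
coordinates outside `S`, then the product measure decouples. -/
lemma indep {p : E → ℝ} (S : Set E) (φ ψ : (E → Bool) → ℝ)
    (hφ : ∀ ω ω', (∀ e ∈ S, ω e = ω' e) → φ ω = φ ω')
    (hψ : ∀ ω ω', (∀ e ∉ S, ω e = ω' e) → ψ ω = ψ ω') :
    (∑ ω : E → Bool, weight p ω * (φ ω * ψ ω)) * (∑ ω : E → Bool, weight p ω)
      = (∑ ω : E → Bool, weight p ω * φ ω) * (∑ ω : E → Bool, weight p ω * ψ ω) := by
  classical
  set A := {e // e ∈ S}
  set B := {e // e ∉ S}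
  let merge : (A → Bool) → (B → Bool) → (E → Bool) := fun a b e =>
    if h : e ∈ S then a ⟨e, h⟩ else b ⟨e, h⟩
  let Φ : (E → Bool) ≃ (A → Bool) × (B → Bool) :=
    { toFun := fun ω => (fun i => ω i.1, fun i => ω i.1)
      invFun := fun ab => merge ab.1 ab.2
      left_inv := by
        intro ω; funext e; simp only [merge]; split <;> rfl
      right_inv := by
        intro ab
        apply Prod.ext
        · funext i; simp only [merge]; rw [dif_pos i.2]
        · funext i; simp only [merge]; rw [dif_neg i.2] }
  let wA : (A → Bool) → ℝ := fun a => ∏ i : A, if a i then p i.1 else 1 - p i.1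
  let wB : (B → Bool) → ℝ := fun b => ∏ i : B, if b i then p i.1 else 1 - p i.1
  have hw : ∀ a b, weight p (merge a b) = wA a * wB b := by
    intro a b
    unfold weight
    rw [← Equiv.prod_comp (Equiv.sumCompl (· ∈ S))
      (fun e => if merge a b e then p e else 1 - p e)]
    rw [Fintype.prod_sum_type]
    congr 1
    · apply Finset.prod_congr rfl
      intro i _
      have : merge a b i.1 = a i := by
        simp only [merge]; rw [dif_pos i.2]
      simp only [Equiv.sumCompl_apply_inl]
      simp only [this]
    · apply Finset.prod_congr rfl
      intro i _
      have : merge a b i.1 = b i := by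
        simp only [merge]; rw [dif_neg i.2]
      simp only [Equiv.sumCompl_apply_inr]
      simp only [this]
  let φA : (A → Bool) → ℝ := fun a => φ (merge a (fun _ => false))
  let ψB : (B → Bool) → ℝ := fun b => ψ (merge (fun _ => false) b)
  have hφ' : ∀ a b, φ (merge a b) = φA a := by
    intro a b
    apply hφ
    intro e he
    simp only [merge]; rw [dif_pos he, dif_pos he]
  have hψ' : ∀ a b, ψ (merge a b) = ψB b := by
    intro a b
    apply hψ
    intro e he
    simp only [merge]; rw [dif_neg he, dif_neg he]
  have key : ∀ F : (E → Bool) → ℝ, ∑ ω : E → Bool, F ω = ∑ ab : (A → Bool) × (B → Bool), F (merge ab.1 ab.2) := by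
    intro F
    rw [← Equiv.sum_comp Φ.symm F]
    rfl
  have e1 : ∑ ω : E → Bool, weight p ω * (φ ω * ψ ω)
      = (∑ a : A → Bool, wA a * φA a) * (∑ b : B → Bool, wB b * ψB b) := by
    rw [key, Fintype.sum_prod_type, Finset.sum_mul_sum]
    apply Finset.sum_congr rfl; intro a _
    apply Finset.sum_congr rfl; intro b _
    rw [hw, hφ' a b, hψ' a b]; ring
  have e2 : ∑ ω : E → Bool, weight p ω = (∑ a : A → Bool, wA a) * (∑ b : B → Bool, wB b) := by
    rw [key, Fintype.sum_prod_type, Finset.sum_mul_sum]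
    apply Finset.sum_congr rfl; intro a _
    apply Finset.sum_congr rfl; intro b _
    rw [hw]
  have e3 : ∑ ω : E → Bool, weight p ω * φ ω
      = (∑ a : A → Bool, wA a * φA a) * (∑ b : B → Bool, wB b) := by
    rw [key, Fintype.sum_prod_type, Finset.sum_mul_sum]
    apply Finset.sum_congr rfl; intro a _
    apply Finset.sum_congr rfl; intro b _
    rw [hw, hφ' a b]; ring
  have e4 : ∑ ω : E → Bool, weight p ω * ψ ω
      = (∑ a : A → Bool, wA a) * (∑ b : B → Bool, wB b * ψB b) := by
    rw [key, Fintype.sum_prod_type, Finset.sum_mul_sum]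
    apply Finset.sum_congr rfl; intro a _
    apply Finset.sum_congr rfl; intro b _
    rw [hw, hψ' a b]; ring
  rw [e1, e2, e3, e4]; ring

end Weights


section Coupling

variable (ends : E → V × V) (oriented : E → Bool) (s : V)

/-- forced-open configuration of `p` -/
noncomputable def omF (p : E → ℝ) : E → Bool := fun e' => if p e' = 1 then true else false

/-- resampling configuration: open on `B`, forced edges and `e`; closed on the
boundary of `B`; `τ` elsewhere. -/
noncomputable def rho (p : E → ℝ) (e : E) (B : Set E) (τ : E → Bool) : E → Bool :=
  fun e' => if e' = e ∨ e' ∈ B ∨ p e' = 1 then true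
    else if e' ∈ Delta ends oriented s B then false else τ e'

variable {ends oriented s}

lemma omF_eq_true {p : E → ℝ} {e' : E} : omF p e' = true ↔ p e' = 1 := by
  unfold omF; split <;> simp_all

lemma rho_open_of {p : E → ℝ} {e e' : E} {B : Set E} {τ : E → Bool}
    (h : e' = e ∨ e' ∈ B ∨ p e' = 1) : rho ends oriented s p e B τ e' = true := by
  unfold rho; rw [if_pos h]

/-- both endpoints of a cluster edge are reachable -/
lemma endpoints_reach {B : Set E} {e₁ : E}
    (h : e₁ ∈ Cluster ends oriented s (ind B)) :
    Reach ends oriented (ind B) s (ends e₁).1 ∧ Reach ends oriented (ind B) s (ends e₁).2 := by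
  obtain ⟨hopen, hent⟩ := h
  rcases hent with h1 | ⟨ho, h2⟩
  · exact ⟨h1, h1.tail ⟨e₁, hopen, Or.inl rfl⟩⟩
  · exact ⟨h2.tail ⟨e₁, hopen, Or.inr ⟨ho, rfl⟩⟩, h2⟩

/-- **Lemma P** (pointwise coupling): enlarging the sealed cluster only helps
avoiding `X`. -/
lemma lemP (X : Set V) (p : E → ℝ) (e : E) (B B' : Set E)
    (hBB' : B ⊆ B')
    (hfeas : ∀ e₁ ∈ B', e₁ ∈ Cluster ends oriented s (ind B'))
    (hsat : ∀ f', p f' = 1 → f' ∉ B' → ¬ EntC ends oriented s (ind B') f')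
    (havoid : ∀ x ∈ X, ¬ Reach ends oriented (ind B') s x)
    (hee : EntC ends oriented s (omF p) e)
    (τ : E → Bool) {x : V} (hx : x ∈ X)
    (hreach : Reach ends oriented (rho ends oriented s p e B' τ) s x) :
    ∃ x' ∈ X, Reach ends oriented (rho ends oriented s p e B τ) s x' := by
  set α := rho ends oriented s p e B τ with hα
  set α' := rho ends oriented s p e B' τ with hα'
  set β' : E → Bool := fun e' => if e' = e then false else α' e' with hβ'
  -- step from the sealed region stays in the sealed region
  have PW : ∀ u v, Reach ends oriented (ind B') s u → Step ends oriented β' u v →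
      Reach ends oriented (ind B') s v := by
    intro u v hu hstep
    obtain ⟨e₁, hopen, hor⟩ := hstep
    have hne : e₁ ≠ e := by
      intro h; rw [hβ'] at hopen; simp only [h, if_pos rfl] at hopen; exact Bool.false_ne_true hopen
    have hρ : α' e₁ = true := by
      rw [hβ'] at hopen; simpa only [if_neg hne] using hopen
    have hent : EntC ends oriented s (ind B') e₁ := by
      rcases hor with h1 | ⟨ho, h2⟩
      · exact Or.inl (by rw [h1]; exact hu)
      · exact Or.inr ⟨ho, by rw [h2]; exact hu⟩
    by_cases hB : e₁ ∈ B'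
    · have hb := endpoints_reach (hfeas e₁ hB)
      rcases hor with h1 | ⟨ho, h2⟩
      · have : v = (ends e₁).2 := by rw [h1]
        rw [this]; exact hb.2
      · have : v = (ends e₁).1 := by rw [h2]
        rw [this]; exact hb.1
    · by_cases hp1 : p e₁ = 1
      · exact absurd hent (hsat e₁ hp1 hB)
      · exfalso
        have hd : e₁ ∈ Delta ends oriented s B' := ⟨hB, hent⟩
        rw [hα'] at hρ
        unfold rho at hρ
        rw [if_neg (by push_neg; exact ⟨hne, hB, hp1⟩), if_pos hd] at hρ
        exact Bool.false_ne_true hρ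
  have P1 : ∀ v, Reach ends oriented β' s v → Reach ends oriented (ind B') s v := by
    intro v hv
    induction hv with
    | refl => exact Relation.ReflTransGen.refl
    | tail hab hbc ih => exact PW _ _ ih hbc
  -- opening one edge
  have P2 : ∀ v, Reach ends oriented α' s v → Reach ends oriented β' s v ∨
      Reach ends oriented β' (ends e).2 v ∨
      (oriented e = false ∧ Reach ends oriented β' (ends e).1 v) := by
    intro v hv
    induction hv with
    | refl => exact Or.inl Relation.ReflTransGen.refl
    | tail hab hbc ih =>
        rename_i b c
        obtain ⟨e₁, hopen, hor⟩ := hbc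
        by_cases hne : e₁ = e
        · subst hne
          rcases hor with h1 | ⟨ho, h2⟩
          · have : c = (ends e₁).2 := by rw [h1]
            rw [this]; exact Or.inr (Or.inl Relation.ReflTransGen.refl)
          · have : c = (ends e₁).1 := by rw [h2]
            rw [this]; exact Or.inr (Or.inr ⟨ho, Relation.ReflTransGen.refl⟩)
        · have hst : Step ends oriented β' b c := by
            refine ⟨e₁, ?_, hor⟩
            rw [hβ']; simpa only [if_neg hne] using hopen
          rcases ih with h | h | ⟨ho, h⟩
          · exact Or.inl (h.tail hst)
          · exact Or.inr (Or.inl (h.tail hst))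
          · exact Or.inr (Or.inr ⟨ho, h.tail hst⟩)
  -- the endpoints of `e` are reachable in `α`
  have hαF : ∀ e', omF p e' = true → α e' = true := by
    intro e' h
    exact rho_open_of (Or.inr (Or.inr (omF_eq_true.mp h)))
  have hαe : α e = true := rho_open_of (Or.inl rfl)
  have P4 : Reach ends oriented α s (ends e).2 ∧
      (oriented e = false → Reach ends oriented α s (ends e).1) := by
    rcases hee with h1 | ⟨ho, h2⟩
    · have r1 : Reach ends oriented α s (ends e).1 := reach_mono hαF h1
      exact ⟨r1.tail ⟨e, hαe, Or.inl rfl⟩, fun _ => r1⟩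
    · have r2 : Reach ends oriented α s (ends e).2 := reach_mono hαF h2
      exact ⟨r2, fun _ => r2.tail ⟨e, hαe, Or.inr ⟨ho, rfl⟩⟩⟩
  -- transfer along β'-paths
  have P3 : ∀ u v, Reach ends oriented β' u v →
      (Reach ends oriented (ind B') s u ∨ Reach ends oriented α s u) →
      (Reach ends oriented (ind B') s v ∨ Reach ends oriented α s v) := by
    intro u v huv
    induction huv with
    | refl => exact id
    | tail hab hbc ih =>
        rename_i b c
        intro hu
        rcases ih hu with hb | hb
        · exact Or.inl (PW _ _ hb hbc)
        · obtain ⟨e₁, hopen, hor⟩ := hbc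
          have hne : e₁ ≠ e := by
            intro h; rw [hβ'] at hopen; simp only [h, if_pos rfl] at hopen
            exact Bool.false_ne_true hopen
          have hρ : α' e₁ = true := by
            rw [hβ'] at hopen; simpa only [if_neg hne] using hopen
          by_cases hB : e₁ ∈ B'
          · have hbnd := endpoints_reach (hfeas e₁ hB)
            rcases hor with h1 | ⟨ho, h2⟩
            · have : c = (ends e₁).2 := by rw [h1]
              rw [this]; exact Or.inl hbnd.2
            · have : c = (ends e₁).1 := by rw [h2]
              rw [this]; exact Or.inl hbnd.1
          · by_cases hp1 : p e₁ = 1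
            · have : α e₁ = true := rho_open_of (Or.inr (Or.inr hp1))
              exact Or.inr (hb.tail ⟨e₁, this, hor⟩)
            · -- e₁ is free for B' hence free for B
              have hnd' : e₁ ∉ Delta ends oriented s B' := by
                intro hd
                rw [hα'] at hρ
                unfold rho at hρ
                rw [if_neg (by push_neg; exact ⟨hne, hB, hp1⟩), if_pos hd] at hρ
                exact Bool.false_ne_true hρ
              have hτ : τ e₁ = true := by
                rw [hα'] at hρ
                unfold rho at hρ
                rw [if_neg (by push_neg; exact ⟨hne, hB, hp1⟩), if_neg hnd'] at hρ
                exact hρ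
              have hαopen : α e₁ = true := by
                have hnB : e₁ ∉ B := fun h => hB (hBB' h)
                have hnd : e₁ ∉ Delta ends oriented s B := by
                  intro hd
                  exact hnd' ⟨hB, entc_mono (fun e' he' =>
                    ind_eq_true.mpr (hBB' (ind_eq_true.mp he'))) hd.2⟩
                rw [hα]
                unfold rho
                rw [if_neg (by push_neg; exact ⟨hne, hnB, hp1⟩), if_neg hnd]
                exact hτ
              exact Or.inr (hb.tail ⟨e₁, hαopen, hor⟩)
  rcases P2 x hreach with h | h | ⟨ho, h⟩
  · exact absurd (P1 x h) (havoid x hx)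
  · rcases P3 _ _ h (Or.inr P4.1) with h' | h'
    · exact absurd h' (havoid x hx)
    · exact ⟨x, hx, h'⟩
  · rcases P3 _ _ h (Or.inr (P4.2 ho)) with h' | h'
    · exact absurd h' (havoid x hx)
    · exact ⟨x, hx, h'⟩

end Coupling


section GT

variable [Fintype E] [DecidableEq E]
variable (ends : E → V × V) (oriented : E → Bool) (s : V) (X : Set V)

/-- restricted sum `∑_{R_X} w·φ` -/
noncomputable def SS (p : E → ℝ) (φ : (E → Bool) → ℝ) : ℝ :=
  ∑ ω : E → Bool, (if ω ∈ RX ends oriented s X then weight p ω * φ ω else 0)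

/-- average of the `R_X`-indicator over resampling outside the sealed cluster `B` -/
noncomputable def havg (p : E → ℝ) (e : E) (B : Set E) : ℝ :=
  ∑ τ : E → Bool, weight (Function.update p e 0) τ *
    (if rho ends oriented s p e B τ ∈ RX ends oriented s X then (1:ℝ) else 0)

noncomputable def HH (p : E → ℝ) (e : E) (B : Set E) : ℝ :=
  if ∀ x ∈ X, ¬ Reach ends oriented (ind B) s x then havg ends oriented s X p e B else 1

/-- the cluster of `ω` enriched by the forced-open edges -/
noncomputable def hatC (p : E → ℝ) (ω : E → Bool) : Set E :=
  Cluster ends oriented s (fun e' => ind (Cluster ends oriented s ω) e' || omF p e')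

/-- the cluster-measurable increasing surrogate of the event `R¹` -/
noncomputable def gt (p : E → ℝ) (e : E) (ω : E → Bool) : ℝ :=
  HH ends oriented s X p e (hatC ends oriented s p ω)

variable {ends oriented s X}

lemma hatC_cluster_eq {p : E → ℝ} {ω ω' : E → Bool}
    (h : Cluster ends oriented s ω = Cluster ends oriented s ω') :
    hatC ends oriented s p ω = hatC ends oriented s p ω' := by
  unfold hatC; rw [h]

lemma hatC_mono {p : E → ℝ} {ω ω' : E → Bool}
    (h : Cluster ends oriented s ω ⊆ Cluster ends oriented s ω') :
    hatC ends oriented s p ω ⊆ hatC ends oriented s p ω' := by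
  apply cluster_mono
  intro e₁ he₁
  rcases Bool.or_eq_true_iff.mp he₁ with h1 | h1
  · exact Bool.or_eq_true_iff.mpr (Or.inl (ind_eq_true.mpr (h (ind_eq_true.mp h1))))
  · exact Bool.or_eq_true_iff.mpr (Or.inr h1)

lemma hatC_feas {p : E → ℝ} (ω : E → Bool) :
    ∀ e₁ ∈ hatC ends oriented s p ω,
      e₁ ∈ Cluster ends oriented s (ind (hatC ends oriented s p ω)) := by
  intro e₁ he₁
  unfold hatC at *
  rw [cluster_idem]
  exact he₁

lemma hatC_sat {p : E → ℝ} (ω : E → Bool) :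
    ∀ f', p f' = 1 → f' ∉ hatC ends oriented s p ω →
      ¬ EntC ends oriented s (ind (hatC ends oriented s p ω)) f' := by
  intro f' hp1 hnm hent
  apply hnm
  unfold hatC at *
  refine ⟨?_, entc_mono ind_cluster_le hent⟩
  apply Bool.or_eq_true_iff.mpr
  right
  exact omF_eq_true.mpr hp1

lemma havg_nonneg {p : E → ℝ} (hp : ∀ e', 0 ≤ p e' ∧ p e' ≤ 1) (e : E) (B : Set E) :
    0 ≤ havg ends oriented s X p e B := by
  apply Finset.sum_nonneg
  intro τ _
  have hp' : ∀ e', 0 ≤ Function.update p e 0 e' ∧ Function.update p e 0 e' ≤ 1 := by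
    intro e'
    by_cases h : e' = e
    · subst h; rw [Function.update_self]; norm_num
    · rw [Function.update_of_ne h]; exact hp e'
  apply mul_nonneg (weight_nonneg hp' τ)
  split <;> norm_num

lemma havg_le_one {p : E → ℝ} (hp : ∀ e', 0 ≤ p e' ∧ p e' ≤ 1) (e : E) (B : Set E) :
    havg ends oriented s X p e B ≤ 1 := by
  have hp' : ∀ e', 0 ≤ Function.update p e 0 e' ∧ Function.update p e 0 e' ≤ 1 := by
    intro e'
    by_cases h : e' = e
    · subst h; rw [Function.update_self]; norm_num
    · rw [Function.update_of_ne h]; exact hp e'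
  calc havg ends oriented s X p e B
      ≤ ∑ τ : E → Bool, weight (Function.update p e 0) τ := by
        apply Finset.sum_le_sum
        intro τ _
        have h0 := weight_nonneg hp' τ
        split
        · simp
        · simpa using h0
    _ = 1 := sum_weight

lemma gt_nonneg {p : E → ℝ} (hp : ∀ e', 0 ≤ p e' ∧ p e' ≤ 1) (e : E) (ω : E → Bool) :
    0 ≤ gt ends oriented s X p e ω := by
  unfold gt HH
  split
  · exact havg_nonneg hp e _
  · norm_num

lemma gt_le_one {p : E → ℝ} (hp : ∀ e', 0 ≤ p e' ∧ p e' ≤ 1) (e : E) (ω : E → Bool) :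
    gt ends oriented s X p e ω ≤ 1 := by
  unfold gt HH
  split
  · exact havg_le_one hp e _
  · norm_num

/-- `gt` is an increasing function of the cluster. -/
lemma gt_incr {p : E → ℝ} (hp : ∀ e', 0 ≤ p e' ∧ p e' ≤ 1) (e : E)
    (hee : EntC ends oriented s (omF p) e) (ω ω' : E → Bool)
    (h : Cluster ends oriented s ω ⊆ Cluster ends oriented s ω') :
    gt ends oriented s X p e ω ≤ gt ends oriented s X p e ω' := by
  set B := hatC ends oriented s p ω with hB
  set B' := hatC ends oriented s p ω' with hB'
  have hBB' : B ⊆ B' := hatC_mono h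
  unfold gt
  rw [← hB, ← hB']
  unfold HH
  by_cases h' : ∀ x ∈ X, ¬ Reach ends oriented (ind B') s x
  · rw [if_pos h']
    have hB2 : ∀ x ∈ X, ¬ Reach ends oriented (ind B) s x := by
      intro x hx hr
      exact h' x hx (reach_mono (fun e' he' =>
        ind_eq_true.mpr (hBB' (ind_eq_true.mp he'))) hr)
    rw [if_pos hB2]
    apply Finset.sum_le_sum
    intro τ _
    have hp' : ∀ e', 0 ≤ Function.update p e 0 e' ∧ Function.update p e 0 e' ≤ 1 := by
      intro e'
      by_cases hc : e' = e
      · subst hc; rw [Function.update_self]; norm_num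
      · rw [Function.update_of_ne hc]; exact hp e'
    apply mul_le_mul_of_nonneg_left _ (weight_nonneg hp' τ)
    by_cases hin : rho ends oriented s p e B' τ ∈ RX ends oriented s X
    · rw [if_pos hin]; split <;> norm_num
    · rw [if_neg hin]
      have : rho ends oriented s p e B τ ∉ RX ends oriented s X := by
        intro hmem
        apply hin
        intro x hx hr
        obtain ⟨x', hx', hr'⟩ := lemP X p e B B' hBB' (hatC_feas ω') (hatC_sat ω') h' hee τ hx hr
        exact hmem x' hx' hr'
      rw [if_neg this]
  · rw [if_neg h']
    split
    · exact havg_le_one hp e _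
    · exact le_refl 1

end GT


section ClassId

variable [Fintype E] [DecidableEq E]
variable {ends : E → V × V} {oriented : E → Bool} {s : V} {X : Set V}

/-- cluster as a finset, for fiber decompositions -/
noncomputable def fib (ends : E → V × V) (oriented : E → Bool) (s : V) (ω : E → Bool) :
    Finset E := Finset.univ.filter (fun e => e ∈ Cluster ends oriented s ω)

lemma fib_eq_iff {ω : E → Bool} {C : Finset E} :
    fib ends oriented s ω = C ↔ Cluster ends oriented s ω = (↑C : Set E) := by
  constructor
  · intro h
    ext x
    have : x ∈ fib ends oriented s ω ↔ x ∈ C := by rw [h]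
    simpa [fib] using this
  · intro h
    ext x
    simp only [fib, Finset.mem_filter, Finset.mem_univ, true_and]
    rw [h]
    rfl

/-- **Class identity**: under the conditional measure, the indicator of `R¹`
can be replaced by the cluster-measurable `gt`. -/
lemma classId {p : E → ℝ} (e : E) (hpe1 : p e ≠ 1)
    (φ : (E → Bool) → ℝ)
    (hφc : ∀ ω ω', Cluster ends oriented s ω = Cluster ends oriented s ω' → φ ω = φ ω') :
    ∑ ω : E → Bool, (if ω ∈ RX ends oriented s X then
        weight (Function.update p e 0) ω *
          (φ ω * (if Function.update ω e true ∈ RX ends oriented s X then (1:ℝ) else 0)) else 0)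
      = ∑ ω : E → Bool, (if ω ∈ RX ends oriented s X then
        weight (Function.update p e 0) ω * (φ ω * gt ends oriented s X p e ω) else 0) := by
  set w₀ := weight (Function.update p e 0) with hw₀
  set L : (E → Bool) → ℝ := fun ω => if ω ∈ RX ends oriented s X then
      w₀ ω * (φ ω * (if Function.update ω e true ∈ RX ends oriented s X then (1:ℝ) else 0)) else 0
  set R : (E → Bool) → ℝ := fun ω => if ω ∈ RX ends oriented s X then
      w₀ ω * (φ ω * gt ends oriented s X p e ω) else 0
  rw [← Finset.sum_fiberwise Finset.univ (fib ends oriented s) L,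
      ← Finset.sum_fiberwise Finset.univ (fib ends oriented s) R]
  apply Finset.sum_congr rfl
  intro C _
  by_cases hne : ∃ ω₀, Cluster ends oriented s ω₀ = (↑C : Set E)
  swap
  · have hempt : Finset.univ.filter (fun ω => fib ends oriented s ω = C) = ∅ := by
      apply Finset.filter_eq_empty_iff.mpr
      intro ω _ h
      exact hne ⟨ω, fib_eq_iff.mp h⟩
    rw [hempt]
    simp
  obtain ⟨ω₀, hω₀⟩ := hne
  set CC : Set E := (↑C : Set E) with hCC
  have hCfeas : Cluster ends oriented s (ind CC) = CC := by
    rw [← hω₀]; exact cluster_idem ω₀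
  have hfibmem : ∀ ω ∈ Finset.univ.filter (fun ω => fib ends oriented s ω = C),
      Cluster ends oriented s ω = CC := by
    intro ω hω
    exact fib_eq_iff.mp (Finset.mem_filter.mp hω).2
  by_cases ravoid : ∀ x ∈ X, ¬ Reach ends oriented (ind CC) s x
  swap
  · -- the cluster reaches X: everything vanishes
    apply Finset.sum_congr rfl
    intro ω hω
    have hnotR : ω ∉ RX ends oriented s X := by
      intro hR
      apply ravoid
      intro x hx hr
      exact (rx_iff.mp hR) x hx (by rw [hfibmem ω hω]; exact hr)
    simp only [L, R, if_neg hnotR]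
  · -- the cluster avoids X
    have hmemR : ∀ ω ∈ Finset.univ.filter (fun ω => fib ends oriented s ω = C),
        ω ∈ RX ends oriented s X := by
      intro ω hω
      apply rx_iff.mpr
      intro x hx hr
      exact ravoid x hx (by rw [← hfibmem ω hω]; exact hr)
    set φc := φ ω₀ with hφc0
    set gtC := gt ends oriented s X p e ω₀ with hgtC
    have hLsum : ∑ ω ∈ Finset.univ.filter (fun ω => fib ends oriented s ω = C), L ω
        = φc * ∑ ω ∈ Finset.univ.filter (fun ω => fib ends oriented s ω = C),
            w₀ ω * (if Function.update ω e true ∈ RX ends oriented s X then (1:ℝ) else 0) := by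
      rw [Finset.mul_sum]
      apply Finset.sum_congr rfl
      intro ω hω
      simp only [L, if_pos (hmemR ω hω)]
      rw [hφc ω ω₀ (by rw [hfibmem ω hω, hω₀])]
      ring
    have hRsum : ∑ ω ∈ Finset.univ.filter (fun ω => fib ends oriented s ω = C), R ω
        = φc * (gtC * ∑ ω ∈ Finset.univ.filter (fun ω => fib ends oriented s ω = C), w₀ ω) := by
      rw [Finset.mul_sum, Finset.mul_sum]
      apply Finset.sum_congr rfl
      intro ω hω
      simp only [R, if_pos (hmemR ω hω)]
      rw [hφc ω ω₀ (by rw [hfibmem ω hω, hω₀])]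
      have hhc : hatC ends oriented s p ω = hatC ends oriented s p ω₀ :=
        hatC_cluster_eq ((hfibmem ω hω).trans hω₀.symm)
      have : gt ends oriented s X p e ω = gtC := by
        rw [hgtC]; unfold gt; rw [hhc]
      rw [this]
      ring
    rw [hLsum, hRsum]
    congr 1
    -- key fiber identity
    by_cases hsup : ∃ ω₁, fib ends oriented s ω₁ = C ∧ w₀ ω₁ ≠ 0
    swap
    · push_neg at hsup
      have hz : ∀ ω ∈ Finset.univ.filter (fun ω => fib ends oriented s ω = C), w₀ ω = 0 := by
        intro ω hω
        exact hsup ω (Finset.mem_filter.mp hω).2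
      rw [Finset.sum_eq_zero, Finset.sum_eq_zero hz, mul_zero]
      intro ω hω
      rw [hz ω hω, zero_mul]
    obtain ⟨ω₁, hfib₁, hw₁⟩ := hsup
    have hCl₁ : Cluster ends oriented s ω₁ = CC := fib_eq_iff.mp hfib₁
    have heCC : e ∉ CC := by
      intro hmem
      have : ω₁ e = true := by
        rw [← hCl₁] at hmem; exact cluster_open hmem
      have h0 : Function.update p e 0 e = 0 := Function.update_self e 0 p
      have := (supp_forced hw₁ e).2 h0
      rw [this] at ‹ω₁ e = true›
      exact Bool.false_ne_true ‹false = true›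
    -- value of gtC: hatC collapses to CC
    have hBC : hatC ends oriented s p ω₀ = CC := by
      unfold hatC
      rw [hω₀]
      apply Set.Subset.antisymm
      · have hle : ∀ e', (ind CC e' || omF p e') = true → ω₁ e' = true := by
          intro e' he'
          rcases Bool.or_eq_true_iff.mp he' with h1 | h1
          · have : e' ∈ CC := ind_eq_true.mp h1
            rw [← hCl₁] at this
            exact cluster_open this
          · have hp1 : p e' = 1 := omF_eq_true.mp h1
            have hne' : e' ≠ e := fun h => hpe1 (h ▸ hp1)
            exact (supp_forced hw₁ e').1 (by rw [Function.update_of_ne hne']; exact hp1)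
        have h2 := cluster_mono (ends := ends) (oriented := oriented) (s := s) hle
        rw [hCl₁] at h2
        exact h2
      · intro e' he'
        have h3 : e' ∈ Cluster ends oriented s (ind CC) := by rw [hCfeas]; exact he'
        exact cluster_mono (fun x hx => Bool.or_eq_true_iff.mpr (Or.inl hx)) h3
    have hgtCval : gtC = havg ends oriented s X p e CC := by
      rw [hgtC]
      unfold gt
      rw [hBC]
      unfold HH
      rw [if_pos ravoid]
    rw [hgtCval]
    -- now apply independence
    set S : Set E := CC ∪ Delta ends oriented s CC with hS
    set φS : (E → Bool) → ℝ := fun ω => if fib ends oriented s ω = C then (1:ℝ) else 0 with hφS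
    set ψ : (E → Bool) → ℝ := fun ω =>
      if rho ends oriented s p e CC ω ∈ RX ends oriented s X then (1:ℝ) else 0 with hψ
    have hφSloc : ∀ ω ω', (∀ e' ∈ S, ω e' = ω' e') → φS ω = φS ω' := by
      intro ω ω' hagree
      have : (fib ends oriented s ω = C) ↔ (fib ends oriented s ω' = C) := by
        rw [fib_eq_iff, fib_eq_iff, fiber_char hCfeas, fiber_char hCfeas]
        constructor
        · rintro ⟨h1, h2⟩
          refine ⟨fun e' he' => ?_, fun e' he' => ?_⟩
          · rw [← hagree e' (Or.inl he')]; exact h1 e' he'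
          · rw [← hagree e' (Or.inr he')]; exact h2 e' he'
        · rintro ⟨h1, h2⟩
          refine ⟨fun e' he' => ?_, fun e' he' => ?_⟩
          · rw [hagree e' (Or.inl he')]; exact h1 e' he'
          · rw [hagree e' (Or.inr he')]; exact h2 e' he'
      simp only [φS]
      split_ifs with h1 h2 h3
      · rfl
      · exact absurd (this.mp h1) h2
      · exact absurd (this.mpr h3) h1
      · rfl
    have hψloc : ∀ ω ω', (∀ e' ∉ S, ω e' = ω' e') → ψ ω = ψ ω' := by
      intro ω ω' hagree
      have : rho ends oriented s p e CC ω = rho ends oriented s p e CC ω' := by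
        funext e'
        unfold rho
        split_ifs with h1 h2
        · rfl
        · rfl
        · push_neg at h1
          exact hagree e' (fun hmem => by
            rcases hmem with hmem | hmem
            · exact h1.2.1 hmem
            · exact h2 hmem)
      simp only [ψ, this]
    have hindep := indep (p := Function.update p e 0) S φS ψ hφSloc hψloc
    rw [sum_weight] at hindep
    -- identify the three sums
    have hclaim1 : ∑ ω : E → Bool, w₀ ω * (φS ω * ψ ω)
        = ∑ ω ∈ Finset.univ.filter (fun ω => fib ends oriented s ω = C),
            w₀ ω * (if Function.update ω e true ∈ RX ends oriented s X then (1:ℝ) else 0) := by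
      rw [Finset.sum_filter]
      apply Finset.sum_congr rfl
      intro ω _
      by_cases hfw : fib ends oriented s ω = C
      · rw [if_pos hfw]
        simp only [φS, if_pos hfw, one_mul]
        by_cases hwz : w₀ ω = 0
        · rw [hwz, zero_mul, zero_mul]
        · have hClω : Cluster ends oriented s ω = CC := fib_eq_iff.mp hfw
          have hupd : Function.update ω e true = rho ends oriented s p e CC ω := by
            funext e'
            unfold rho
            by_cases h1 : e' = e ∨ e' ∈ CC ∨ p e' = 1
            · rw [if_pos h1]
              rcases h1 with h1 | h1 | h1
              · rw [h1, Function.update_self]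
              · have hne' : e' ≠ e := fun h => heCC (h ▸ h1)
                rw [Function.update_of_ne hne']
                rw [← hClω] at h1
                exact cluster_open h1
              · have hne' : e' ≠ e := fun h => hpe1 (h ▸ h1)
                rw [Function.update_of_ne hne']
                exact (supp_forced hwz e').1 (by rw [Function.update_of_ne hne']; exact h1)
            · push_neg at h1
              rw [if_neg (by push_neg; exact h1)]
              rw [Function.update_of_ne h1.1]
              by_cases h2 : e' ∈ Delta ends oriented s CC
              · rw [if_pos h2]
                exact ((fiber_char hCfeas ω).mp hClω).2 e' h2
              · rw [if_neg h2]
          rw [hupd]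
      · rw [if_neg hfw]
        simp only [φS, if_neg hfw, zero_mul, mul_zero]
    have hclaim2 : ∑ ω : E → Bool, w₀ ω * φS ω
        = ∑ ω ∈ Finset.univ.filter (fun ω => fib ends oriented s ω = C), w₀ ω := by
      rw [Finset.sum_filter]
      apply Finset.sum_congr rfl
      intro ω _
      by_cases hfw : fib ends oriented s ω = C
      · rw [if_pos hfw]; simp only [φS, if_pos hfw, mul_one]
      · rw [if_neg hfw]; simp only [φS, if_neg hfw, mul_zero]
    have hclaim3 : ∑ ω : E → Bool, w₀ ω * ψ ω = havg ends oriented s X p e CC := rfl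
    rw [hclaim1, hclaim2, hclaim3, mul_one] at hindep
    rw [hindep]
    exact mul_comm _ _

end ClassId


section Lmono

variable [Fintype E] [DecidableEq E]
variable {ends : E → V × V} {oriented : E → Bool} {s : V} {X : Set V}

lemma hp_update {p : E → ℝ} (hp : ∀ e', 0 ≤ p e' ∧ p e' ≤ 1) (e : E) {q : ℝ}
    (hq : 0 ≤ q ∧ q ≤ 1) : ∀ e', 0 ≤ Function.update p e q e' ∧ Function.update p e q e' ≤ 1 := by
  intro e'
  by_cases h : e' = e
  · subst h; rw [Function.update_self]; exact hq
  · rw [Function.update_of_ne h]; exact hp e'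

lemma le_update_true {ω : E → Bool} {e : E} :
    ∀ e', ω e' = true → Function.update ω e true e' = true := by
  intro e' h
  by_cases he' : e' = e
  · subst he'; rw [Function.update_self]
  · rw [Function.update_of_ne he']; exact h

lemma weight_flip {p : E → ℝ} {ω : E → Bool} {e : E} (h : ω e = false) :
    weight (Function.update p e 1) (Function.update ω e true) = weight (Function.update p e 0) ω := by
  unfold weight
  rw [← Finset.mul_prod_erase Finset.univ _ (Finset.mem_univ e),
      ← Finset.mul_prod_erase Finset.univ
        (fun e' => if ω e' then Function.update p e 0 e' else 1 - Function.update p e 0 e')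
        (Finset.mem_univ e)]
  congr 1
  · rw [Function.update_self, Function.update_self, h, Function.update_self]
    norm_num
  · apply Finset.prod_congr rfl
    intro x hx
    have hne := Finset.ne_of_mem_erase hx
    rw [Function.update_of_ne hne, Function.update_of_ne hne, Function.update_of_ne hne]

lemma SS_one_reindex (p : E → ℝ) (e : E) (φ : (E → Bool) → ℝ) :
    SS ends oriented s X (Function.update p e 1) φ =
      ∑ ω : E → Bool, weight (Function.update p e 0) ω *
        ((if Function.update ω e true ∈ RX ends oriented s X then (1:ℝ) else 0) *
          φ (Function.update ω e true)) := by
  have hinv : Function.Involutive (fun ω : E → Bool => Function.update ω e (!(ω e))) := by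
    intro ω
    funext e'
    by_cases h : e' = e
    · subst h; simp
    · simp [Function.update_of_ne h]
  unfold SS
  rw [← Equiv.sum_comp (Function.Involutive.toPerm _ hinv) (fun ω => if ω ∈ RX ends oriented s X then
      weight (Function.update p e 1) ω * φ ω else 0)]
  apply Finset.sum_congr rfl
  intro ω _
  have htp : (Function.Involutive.toPerm _ hinv) ω = Function.update ω e (!(ω e)) := rfl
  rw [htp]
  cases hb : ω e
  · -- ω e = false : flip to true
    simp only [Bool.not_false]
    rw [weight_flip hb]
    by_cases hR : Function.update ω e true ∈ RX ends oriented s X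
    · rw [if_pos hR, if_pos hR]; ring
    · rw [if_neg hR, if_neg hR]; ring
  · -- ω e = true : both sides vanish
    simp only [Bool.not_true]
    have h1 : weight (Function.update p e 1) (Function.update ω e false) = 0 := by
      apply Finset.prod_eq_zero (Finset.mem_univ e)
      rw [Function.update_self, Function.update_self]
      norm_num
    have h2 : weight (Function.update p e 0) ω = 0 := by
      apply Finset.prod_eq_zero (Finset.mem_univ e)
      rw [hb, Function.update_self]
      simp
    rw [h1, h2]
    split <;> ring

/-- **Lemma L**: conditional expectation of a cluster-increasing function
increases when an edge rooted at the forced cluster is switched on. -/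
lemma Lmono (p : E → ℝ) (hp : ∀ e', 0 ≤ p e' ∧ p e' ≤ 1) (e : E)
    (hpe : 0 < p e ∧ p e < 1)
    (hee : EntC ends oriented s (omF p) e)
    (f : (E → Bool) → ℝ)
    (hf : ∀ ω ω', Cluster ends oriented s ω ⊆ Cluster ends oriented s ω' → f ω ≤ f ω')
    (IH : ∀ f' g' : (E → Bool) → ℝ,
      (∀ ω ω', Cluster ends oriented s ω ⊆ Cluster ends oriented s ω' → f' ω ≤ f' ω') →
      (∀ ω ω', Cluster ends oriented s ω ⊆ Cluster ends oriented s ω' → g' ω ≤ g' ω') →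
      SS ends oriented s X (Function.update p e 0) (fun ω => f' ω * g' ω) *
          SS ends oriented s X (Function.update p e 0) 1 ≥
        SS ends oriented s X (Function.update p e 0) f' *
          SS ends oriented s X (Function.update p e 0) g') :
    SS ends oriented s X (Function.update p e 1) f *
        SS ends oriented s X (Function.update p e 0) 1 ≥
      SS ends oriented s X (Function.update p e 0) f *
        SS ends oriented s X (Function.update p e 1) 1 := by
  set w₀ := weight (Function.update p e 0) with hw₀
  have hp0 : ∀ e', 0 ≤ Function.update p e 0 e' ∧ Function.update p e 0 e' ≤ 1 :=
    hp_update hp e ⟨le_refl 0, zero_le_one⟩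
  have hw0nn : ∀ ω, 0 ≤ w₀ ω := fun ω => weight_nonneg hp0 ω
  set ind1 : (E → Bool) → ℝ := fun ω =>
    if Function.update ω e true ∈ RX ends oriented s X then (1:ℝ) else 0 with hind1
  -- the reindexed expressions
  have hSS1f : SS ends oriented s X (Function.update p e 1) f
      = ∑ ω : E → Bool, w₀ ω * (ind1 ω * f (Function.update ω e true)) :=
    SS_one_reindex p e f
  have hSS11 : SS ends oriented s X (Function.update p e 1) 1
      = ∑ ω : E → Bool, w₀ ω * ind1 ω := by
    rw [SS_one_reindex p e 1]
    apply Finset.sum_congr rfl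
    intro ω _
    simp only [Pi.one_apply, mul_one]; rfl
  -- monotonicity step : f(ω∪e) ≥ f(ω)
  have hstep1 : SS ends oriented s X (Function.update p e 1) f
      ≥ ∑ ω : E → Bool, w₀ ω * (ind1 ω * f ω) := by
    rw [hSS1f]
    apply Finset.sum_le_sum
    intro ω _
    apply mul_le_mul_of_nonneg_left _ (hw0nn ω)
    apply mul_le_mul_of_nonneg_left _ (by rw [hind1]; dsimp only; split <;> norm_num)
    exact hf ω (Function.update ω e true) (cluster_mono le_update_true)
  -- identities via classId
  have hR1R : ∀ ω : E → Bool, ω ∉ RX ends oriented s X → ind1 ω = 0 := by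
    intro ω hω
    rw [hind1]
    dsimp only
    rw [if_neg]
    intro hmem
    exact hω (rx_anti le_update_true hmem)
  have hfconst : ∀ ω ω', Cluster ends oriented s ω = Cluster ends oriented s ω' → f ω = f ω' :=
    fun ω ω' h => le_antisymm (hf ω ω' h.le) (hf ω' ω h.ge)
  have hid1 : ∑ ω : E → Bool, w₀ ω * (ind1 ω * f ω)
      = SS ends oriented s X (Function.update p e 0) (fun ω => f ω * gt ends oriented s X p e ω) := by
    have h1 : ∑ ω : E → Bool, w₀ ω * (ind1 ω * f ω)
        = ∑ ω : E → Bool, (if ω ∈ RX ends oriented s X then w₀ ω * (f ω * ind1 ω) else 0) := by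
      apply Finset.sum_congr rfl
      intro ω _
      by_cases hω : ω ∈ RX ends oriented s X
      · rw [if_pos hω]; ring
      · rw [if_neg hω, hR1R ω hω]; ring
    rw [h1]
    exact classId e (ne_of_lt hpe.2) f hfconst
  have hid2 : ∑ ω : E → Bool, w₀ ω * ind1 ω
      = SS ends oriented s X (Function.update p e 0) (gt ends oriented s X p e) := by
    have h1 : ∑ ω : E → Bool, w₀ ω * ind1 ω
        = ∑ ω : E → Bool, (if ω ∈ RX ends oriented s X then w₀ ω * ((1:ℝ) * ind1 ω) else 0) := by
      apply Finset.sum_congr rfl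
      intro ω _
      by_cases hω : ω ∈ RX ends oriented s X
      · rw [if_pos hω]; ring
      · rw [if_neg hω, hR1R ω hω]; ring
    rw [h1]
    have := classId (ends := ends) (oriented := oriented) (s := s) (X := X) e
      (ne_of_lt hpe.2) 1 (fun _ _ _ => rfl)
    simp only [Pi.one_apply] at this
    rw [this]
    unfold SS
    apply Finset.sum_congr rfl
    intro ω _
    rw [one_mul]
  -- apply the induction hypothesis with the surrogate g
  have hIH := IH f (gt ends oriented s X p e) hf (fun ω ω' h => gt_incr hp e hee ω ω' h)
  have hSS0nn : 0 ≤ SS ends oriented s X (Function.update p e 0) 1 := by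
    apply Finset.sum_nonneg
    intro ω _
    split
    · simpa using hw0nn ω
    · exact le_refl (0:ℝ)
  rw [ge_iff_le]
  calc SS ends oriented s X (Function.update p e 0) f *
        SS ends oriented s X (Function.update p e 1) 1
      = SS ends oriented s X (Function.update p e 0) f *
          SS ends oriented s X (Function.update p e 0) (gt ends oriented s X p e) := by
        rw [hSS11, hid2]
    _ ≤ SS ends oriented s X (Function.update p e 0)
          (fun ω => f ω * gt ends oriented s X p e ω) *
          SS ends oriented s X (Function.update p e 0) 1 := hIH
    _ = (∑ ω : E → Bool, w₀ ω * (ind1 ω * f ω)) *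
          SS ends oriented s X (Function.update p e 0) 1 := by rw [hid1]
    _ ≤ SS ends oriented s X (Function.update p e 1) f *
          SS ends oriented s X (Function.update p e 0) 1 :=
        mul_le_mul_of_nonneg_right hstep1 hSS0nn

end Lmono


section Key

variable [Fintype E] [DecidableEq E]
variable {ends : E → V × V} {oriented : E → Bool} {s : V} {X : Set V}

lemma SS_zero_of {p : E → ℝ} (hp : ∀ e', 0 ≤ p e' ∧ p e' ≤ 1)
    (h : SS ends oriented s X p 1 = 0) (φ : (E → Bool) → ℝ) :
    SS ends oriented s X p φ = 0 := by
  have hterm : ∀ ω ∈ (Finset.univ : Finset (E → Bool)),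
      (if ω ∈ RX ends oriented s X then weight p ω * (1 : (E → Bool) → ℝ) ω else 0) = 0 := by
    apply (Finset.sum_eq_zero_iff_of_nonneg ?_).mp h
    intro ω _
    split
    · simpa using weight_nonneg hp ω
    · exact le_refl 0
  apply Finset.sum_eq_zero
  intro ω hω
  by_cases hR : ω ∈ RX ends oriented s X
  · have := hterm ω hω
    rw [if_pos hR] at this
    simp only [Pi.one_apply, mul_one] at this
    rw [if_pos hR, this, zero_mul]
  · rw [if_neg hR]

lemma SS_nonneg {p : E → ℝ} (hp : ∀ e', 0 ≤ p e' ∧ p e' ≤ 1) :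
    0 ≤ SS ends oriented s X p 1 := by
  apply Finset.sum_nonneg
  intro ω _
  split
  · simpa using weight_nonneg hp ω
  · exact le_refl 0

lemma SS_split {p : E → ℝ} (e : E) (φ : (E → Bool) → ℝ) :
    SS ends oriented s X p φ =
      p e * SS ends oriented s X (Function.update p e 1) φ
        + (1 - p e) * SS ends oriented s X (Function.update p e 0) φ := by
  unfold SS
  rw [Finset.mul_sum, Finset.mul_sum, ← Finset.sum_add_distrib]
  apply Finset.sum_congr rfl
  intro ω _
  by_cases hR : ω ∈ RX ends oriented s X
  · rw [if_pos hR, if_pos hR, if_pos hR, weight_split e ω]; ring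
  · rw [if_neg hR, if_neg hR, if_neg hR]; ring

/-- **Main induction**: the conditional FKG inequality for cluster functions. -/
lemma key (ends : E → V × V) (oriented : E → Bool) (s : V) (X : Set V)
    (n : ℕ) :
    ∀ p : E → ℝ, (∀ e', 0 ≤ p e' ∧ p e' ≤ 1) →
    (Finset.univ.filter (fun e' => 0 < p e' ∧ p e' < 1)).card = n →
    ∀ f g : (E → Bool) → ℝ,
    (∀ ω ω', Cluster ends oriented s ω ⊆ Cluster ends oriented s ω' → f ω ≤ f ω') →
    (∀ ω ω', Cluster ends oriented s ω ⊆ Cluster ends oriented s ω' → g ω ≤ g ω') →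
    SS ends oriented s X p (fun ω => f ω * g ω) * SS ends oriented s X p 1
      ≥ SS ends oriented s X p f * SS ends oriented s X p g := by
  induction n using Nat.strong_induction_on with
  | _ n IH =>
  intro p hp hcard f g hf hg
  by_cases hA : ∃ e, (0 < p e ∧ p e < 1) ∧ EntC ends oriented s (omF p) e
  · -- inductive step
    obtain ⟨e, hpe, hee⟩ := hA
    have heF : e ∈ Finset.univ.filter (fun e' => 0 < p e' ∧ p e' < 1) :=
      Finset.mem_filter.mpr ⟨Finset.mem_univ e, hpe⟩
    have hn0 : 0 < n := by
      rw [← hcard]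
      exact Finset.card_pos.mpr ⟨e, heF⟩
    have hfilter : ∀ q : ℝ, ¬(0 < q ∧ q < 1) →
        Finset.univ.filter (fun e' => 0 < Function.update p e q e' ∧ Function.update p e q e' < 1)
          = (Finset.univ.filter (fun e' => 0 < p e' ∧ p e' < 1)).erase e := by
      intro q hq
      ext e'
      rw [Finset.mem_filter, Finset.mem_erase, Finset.mem_filter]
      by_cases h : e' = e
      · subst h
        rw [Function.update_self]
        simp [hq]
      · rw [Function.update_of_ne h]
        simp [h]
    have hcard0 : (Finset.univ.filter (fun e' =>
        0 < Function.update p e 0 e' ∧ Function.update p e 0 e' < 1)).card = n - 1 := by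
      rw [hfilter 0 (by norm_num), Finset.card_erase_of_mem heF, hcard]
    have hcard1 : (Finset.univ.filter (fun e' =>
        0 < Function.update p e 1 e' ∧ Function.update p e 1 e' < 1)).card = n - 1 := by
      rw [hfilter 1 (by norm_num), Finset.card_erase_of_mem heF, hcard]
    have hlt : n - 1 < n := Nat.sub_lt hn0 one_pos
    have hp0 := hp_update hp e (q := 0) ⟨le_refl 0, zero_le_one⟩
    have hp1 := hp_update hp e (q := 1) ⟨zero_le_one, le_refl 1⟩
    have IH0 : ∀ f' g' : (E → Bool) → ℝ,
        (∀ ω ω', Cluster ends oriented s ω ⊆ Cluster ends oriented s ω' → f' ω ≤ f' ω') →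
        (∀ ω ω', Cluster ends oriented s ω ⊆ Cluster ends oriented s ω' → g' ω ≤ g' ω') →
        SS ends oriented s X (Function.update p e 0) (fun ω => f' ω * g' ω) *
            SS ends oriented s X (Function.update p e 0) 1 ≥
          SS ends oriented s X (Function.update p e 0) f' *
            SS ends oriented s X (Function.update p e 0) g' :=
      fun f' g' hf' hg' => IH (n-1) hlt (Function.update p e 0) hp0 hcard0 f' g' hf' hg'
    have IH1 := IH (n-1) hlt (Function.update p e 1) hp1 hcard1 f g hf hg
    have IH0fg := IH0 f g hf hg
    have hLf := Lmono p hp e hpe hee f hf IH0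
    have hLg := Lmono p hp e hpe hee g hg IH0
    set S1fg := SS ends oriented s X (Function.update p e 1) (fun ω => f ω * g ω) with hS1fg
    set S0fg := SS ends oriented s X (Function.update p e 0) (fun ω => f ω * g ω) with hS0fg
    set S1f := SS ends oriented s X (Function.update p e 1) f with hS1f
    set S0f := SS ends oriented s X (Function.update p e 0) f with hS0f
    set S1g := SS ends oriented s X (Function.update p e 1) g with hS1g
    set S0g := SS ends oriented s X (Function.update p e 0) g with hS0g
    set Z1 := SS ends oriented s X (Function.update p e 1) 1 with hZ1
    set Z0 := SS ends oriented s X (Function.update p e 0) 1 with hZ0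
    have hZ1nn : 0 ≤ Z1 := SS_nonneg hp1
    have hZ0nn : 0 ≤ Z0 := SS_nonneg hp0
    have hXterm : S1fg * Z0 + S0fg * Z1 - S1f * S0g - S0f * S1g ≥ 0 := by
      by_cases hz1 : Z1 = 0
      · have hzero : ∀ φ, SS ends oriented s X (Function.update p e 1) φ = 0 :=
          SS_zero_of hp1 hz1
        have e1 : S1fg = 0 := hzero _
        have e2 : S1f = 0 := hzero _
        have e3 : S1g = 0 := hzero _
        rw [e1, e2, e3, hz1]
        ring_nf
        exact le_refl 0
      by_cases hz0 : Z0 = 0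
      · have hzero : ∀ φ, SS ends oriented s X (Function.update p e 0) φ = 0 :=
          SS_zero_of hp0 hz0
        have e1 : S0fg = 0 := hzero _
        have e2 : S0f = 0 := hzero _
        have e3 : S0g = 0 := hzero _
        rw [e1, e2, e3, hz0]
        ring_nf
        exact le_refl 0
      have hZ1pos : 0 < Z1 := lt_of_le_of_ne hZ1nn (Ne.symm hz1)
      have hZ0pos : 0 < Z0 := lt_of_le_of_ne hZ0nn (Ne.symm hz0)
      have hu1 : S1fg * Z1 - S1f * S1g ≥ 0 := by rw [ge_iff_le, sub_nonneg]; exact IH1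
      have hu0 : S0fg * Z0 - S0f * S0g ≥ 0 := by rw [ge_iff_le, sub_nonneg]; exact IH0fg
      have hLf' : S1f * Z0 - S0f * Z1 ≥ 0 := by rw [ge_iff_le, sub_nonneg]; exact hLf
      have hLg' : S1g * Z0 - S0g * Z1 ≥ 0 := by rw [ge_iff_le, sub_nonneg]; exact hLg
      have hprod : (S1fg * Z0 + S0fg * Z1 - S1f * S0g - S0f * S1g) * (Z1 * Z0)
          = (S1fg * Z1 - S1f * S1g) * (Z0 * Z0) + (S0fg * Z0 - S0f * S0g) * (Z1 * Z1)
            + (S1f * Z0 - S0f * Z1) * (S1g * Z0 - S0g * Z1) := by ring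
      have hrhs : 0 ≤ (S1fg * Z1 - S1f * S1g) * (Z0 * Z0) + (S0fg * Z0 - S0f * S0g) * (Z1 * Z1)
            + (S1f * Z0 - S0f * Z1) * (S1g * Z0 - S0g * Z1) := by
        have t1 := mul_nonneg hu1 (mul_nonneg hZ0nn hZ0nn)
        have t2 := mul_nonneg hu0 (mul_nonneg hZ1nn hZ1nn)
        have t3 := mul_nonneg hLf' hLg'
        linarith
      have hmulpos : 0 < Z1 * Z0 := mul_pos hZ1pos hZ0pos
      rw [← hprod] at hrhs
      rw [ge_iff_le]
      exact nonneg_of_mul_nonneg_right (by linarith [hrhs] :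
        0 ≤ Z1 * Z0 * (S1fg * Z0 + S0fg * Z1 - S1f * S0g - S0f * S1g)) hmulpos
    rw [SS_split e (fun ω => f ω * g ω), SS_split e f, SS_split e g, SS_split e 1]
    rw [← hS1fg, ← hS0fg, ← hS1f, ← hS0f, ← hS1g, ← hS0g, ← hZ1, ← hZ0]
    have ha : 0 < p e := hpe.1
    have hb : 0 < 1 - p e := by linarith [hpe.2]
    have hu1' : S1fg * Z1 - S1f * S1g ≥ 0 := by rw [ge_iff_le, sub_nonneg]; exact IH1
    have hu0' : S0fg * Z0 - S0f * S0g ≥ 0 := by rw [ge_iff_le, sub_nonneg]; exact IH0fg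
    nlinarith [mul_nonneg (mul_nonneg ha.le ha.le) hu1',
      mul_nonneg (mul_nonneg hb.le hb.le) hu0',
      mul_nonneg (mul_nonneg ha.le hb.le) hXterm]
  · -- degenerate case : the cluster is a.s. constant
    push_neg at hA
    have hconst : ∀ ω, weight p ω ≠ 0 →
        Cluster ends oriented s ω = Cluster ends oriented s (omF p) := by
      intro ω hw
      have homle : ∀ e', omF p e' = true → ω e' = true := by
        intro e' h
        exact (supp_forced hw e').1 (omF_eq_true.mp h)
      have hdet : ∀ e₁, EntC ends oriented s (omF p) e₁ → ω e₁ = true → omF p e₁ = true := by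
        intro e₁ hent hop
        have hnot : ¬(0 < p e₁ ∧ p e₁ < 1) := fun hcon => hA e₁ hcon hent
        have : p e₁ = 0 ∨ p e₁ = 1 := by
          rcases hp e₁ with ⟨h0, h1⟩
          by_contra hcon
          push_neg at hcon
          exact hnot ⟨lt_of_le_of_ne h0 (Ne.symm hcon.1), lt_of_le_of_ne h1 hcon.2⟩
        rcases this with h | h
        · have := (supp_forced hw e₁).2 h
          rw [this] at hop
          exact absurd hop (by simp)
        · exact omF_eq_true.mpr h
      have hreach : ∀ v, Reach ends oriented ω s v → Reach ends oriented (omF p) s v := by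
        intro v hv
        induction hv with
        | refl => exact Relation.ReflTransGen.refl
        | tail hab hbc ih =>
            rename_i b c
            obtain ⟨e₁, hopen, hor⟩ := hbc
            have hent : EntC ends oriented s (omF p) e₁ := by
              rcases hor with h' | ⟨ho, h'⟩
              · exact Or.inl (by rw [h']; exact ih)
              · exact Or.inr ⟨ho, by rw [h']; exact ih⟩
            exact ih.tail ⟨e₁, hdet e₁ hent hopen, hor⟩
      apply Set.Subset.antisymm
      · intro e₁ he₁
        have hent : EntC ends oriented s (omF p) e₁ := by
          rcases he₁.2 with h' | ⟨ho, h'⟩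
          · exact Or.inl (hreach _ h')
          · exact Or.inr ⟨ho, hreach _ h'⟩
        exact ⟨hdet e₁ hent he₁.1, hent⟩
      · exact cluster_mono homle
    have hSSconst : ∀ φ : (E → Bool) → ℝ,
        (∀ ω ω', Cluster ends oriented s ω = Cluster ends oriented s ω' → φ ω = φ ω') →
        SS ends oriented s X p φ = φ (omF p) * SS ends oriented s X p 1 := by
      intro φ hφc
      unfold SS
      rw [Finset.mul_sum]
      apply Finset.sum_congr rfl
      intro ω _
      by_cases hR : ω ∈ RX ends oriented s X
      · rw [if_pos hR, if_pos hR]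
        by_cases hw : weight p ω = 0
        · rw [hw]; ring
        · rw [hφc ω (omF p) (hconst ω hw)]
          simp only [Pi.one_apply]
          ring
      · rw [if_neg hR, if_neg hR]; ring
    have hfc : ∀ ω ω', Cluster ends oriented s ω = Cluster ends oriented s ω' → f ω = f ω' :=
      fun ω ω' h => le_antisymm (hf ω ω' h.le) (hf ω' ω h.ge)
    have hgc : ∀ ω ω', Cluster ends oriented s ω = Cluster ends oriented s ω' → g ω = g ω' :=
      fun ω ω' h => le_antisymm (hg ω ω' h.le) (hg ω' ω h.ge)
    have hfgc : ∀ ω ω', Cluster ends oriented s ω = Cluster ends oriented s ω' →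
        f ω * g ω = f ω' * g ω' := fun ω ω' h => by rw [hfc ω ω' h, hgc ω ω' h]
    rw [hSSconst f hfc, hSSconst g hgc, hSSconst (fun ω => f ω * g ω) hfgc]
    rw [ge_iff_le]
    apply le_of_eq
    ring

end Key


/-- Theorem 3.2. If `X ⊆ V \ {s}` with `Pr(R_X) > 0` and
`f`, `g` are bounded increasing functions of the open cluster `C_s`, then
`E[f·g | R_X] ≥ E[f | R_X] · E[g | R_X]`. -/
theorem stmt14 [Fintype V] [Fintype E] [DecidableEq E]
    (ends : E → V × V) (oriented : E → Bool)
    (p : E → ℝ) (hp : ∀ e, 0 ≤ p e ∧ p e ≤ 1)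
    (s : V) (X : Set V) (hX : s ∉ X)
    (hpos : 0 < Pr p (RX ends oriented s X))
    (f g : (E → Bool) → ℝ)
    (hfb : ∃ M, ∀ ω, |f ω| ≤ M) (hgb : ∃ M, ∀ ω, |g ω| ≤ M)
    (hf : ∀ ω ω',
      Cluster ends oriented s ω ⊆ Cluster ends oriented s ω' → f ω ≤ f ω')
    (hg : ∀ ω ω',
      Cluster ends oriented s ω ⊆ Cluster ends oriented s ω' → g ω ≤ g ω') :
    condExp p (fun ω => f ω * g ω) (RX ends oriented s X) ≥
      condExp p f (RX ends oriented s X) *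
        condExp p g (RX ends oriented s X) := by
  have hPr : Pr p (RX ends oriented s X) = SS ends oriented s X p 1 := by
    unfold Pr SS
    apply Finset.sum_congr rfl
    intro ω _
    rw [Set.indicator_apply]
    by_cases hR : ω ∈ RX ends oriented s X
    · rw [if_pos hR, if_pos hR]
      simp
    · rw [if_neg hR, if_neg hR]
  have hnum : ∀ φ : (E → Bool) → ℝ,
      (∑ ω : E → Bool, (RX ends oriented s X).indicator (fun ω' => weight p ω' * φ ω') ω)
        = SS ends oriented s X p φ := by
    intro φ
    apply Finset.sum_congr rfl
    intro ω _
    rw [Set.indicator_apply]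
  have hZ : 0 < SS ends oriented s X p 1 := by rw [← hPr]; exact hpos
  have hkey := key ends oriented s X
    ((Finset.univ.filter (fun e' => 0 < p e' ∧ p e' < 1)).card) p hp rfl f g hf hg
  unfold condExp
  rw [hnum, hnum, hnum, hPr]
  rw [ge_iff_le, div_mul_div_comm, div_le_div_iff₀ (mul_pos hZ hZ) hZ]
  nlinarith [mul_nonneg (sub_nonneg.mpr (le_of_lt hZ)) (sub_nonneg.mpr hkey), hZ,
    mul_nonneg (le_of_lt hZ) (sub_nonneg.mpr hkey)]

end MixedPerc
end
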